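/- arXiv:1803.06537 — 9 statements merged into one kernel-verified Lean document; each statement's English description precedes it below -/
import Mathlib

section
/- Let p ≥ 1 affine maps f_i(x) = A_i x + b_i on ℝ^D with λ_H = max_{1≤i≤p} ‖A_i‖ (operator norm). Let K_0 be a nonempty compact subset of ℝ^D and let (K_n)_n and (d_n)_n be the renormalized Hutchinson orbit and its normalizing sequence. If the sequence (d_n)_n converges to a positive number d with d > λ_H, then the sequence (K_n)_n converges in the Hausdorff metric to the attractor L_d of the contractive IFS {f_1/d, …, f_p/d}. -/
open Metric Filter Pointwise Topology

noncomputable section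

/-- The radius function `ρ(K) = sup {‖x‖ : x ∈ K}`. -/
def rad {D : ℕ} (K : Set (EuclideanSpace ℝ (Fin D))) : ℝ := sSup (norm '' K)

/-- The Hutchinson operator `H(K) = ⋃ i, f i '' K`. -/
def hutch {D p : ℕ} (f : Fin (p + 1) → EuclideanSpace ℝ (Fin D) → EuclideanSpace ℝ (Fin D))
    (K : Set (EuclideanSpace ℝ (Fin D))) : Set (EuclideanSpace ℝ (Fin D)) := ⋃ i, f i '' K

/-- The renormalized Hutchinson operator `H_ρ(K) = ρ(H(K))⁻¹ • H(K)`. -/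
def hutchRho {D p : ℕ} (f : Fin (p + 1) → EuclideanSpace ℝ (Fin D) → EuclideanSpace ℝ (Fin D))
    (K : Set (EuclideanSpace ℝ (Fin D))) : Set (EuclideanSpace ℝ (Fin D)) :=
  (rad (hutch f K))⁻¹ • hutch f K

section Aux

variable {E : Type*} [NormedAddCommGroup E] [NormedSpace ℝ E]

theorem aux_seq (u ε : ℕ → ℝ) (q : ℝ) (hq0 : 0 ≤ q) (hq1 : q < 1)
    (hu : ∀ n, 0 ≤ u n) (hε : Tendsto ε atTop (𝓝 0))
    (hrec : ∀ᶠ n in atTop, u (n + 1) ≤ q * u n + ε n) :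
    Tendsto u atTop (𝓝 0) := by
  rw [Metric.tendsto_atTop]
  intro δ hδ
  have hε' : ∀ᶠ n in atTop, ε n ≤ (1 - q) * (δ / 2) := by
    have : (0:ℝ) < (1 - q) * (δ / 2) := by nlinarith
    filter_upwards [hε.eventually_lt_const this] with n hn using hn.le
  obtain ⟨N, hN⟩ := (hrec.and hε').exists_forall_of_atTop
  have key : ∀ k, u (N + k) ≤ q ^ k * u N + δ / 2 := by
    intro k
    induction k with
    | zero => simpa using by linarith [hu N, hδ]
    | succ k ih =>
      have h1 := (hN (N + k) (by omega)).1
      have h2 := (hN (N + k) (by omega)).2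
      have hq : q ^ k * u N ≥ 0 := mul_nonneg (pow_nonneg hq0 k) (hu N)
      calc u (N + (k + 1)) = u ((N + k) + 1) := by ring_nf
        _ ≤ q * u (N + k) + ε (N + k) := h1
        _ ≤ q * (q ^ k * u N + δ / 2) + (1 - q) * (δ / 2) := by
            have := mul_le_mul_of_nonneg_left ih hq0
            linarith
        _ = q ^ (k + 1) * u N + (q * (δ/2) + (1 - q) * (δ/2)) := by ring
        _ = q ^ (k + 1) * u N + δ / 2 := by ring
  have hpow : Tendsto (fun k => q ^ k * u N) atTop (𝓝 0) := by
    simpa using (tendsto_pow_atTop_nhds_zero_of_lt_one hq0 hq1).mul_const (u N)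
  obtain ⟨M, hM⟩ := (hpow.eventually_lt_const (by linarith : (0:ℝ) < δ / 2)).exists_forall_of_atTop
  refine ⟨N + M, fun n hn => ?_⟩
  have hn' : n = N + (n - N) := by omega
  have h1 : u n ≤ q ^ (n - N) * u N + δ / 2 := by
    have := key (n - N); rwa [← hn'] at this
  have h2 : q ^ (n - N) * u N < δ / 2 := hM _ (by omega)
  rw [Real.dist_eq, sub_zero, abs_of_nonneg (hu n)]
  linarith

theorem aux_rad_ge {S : Set E} (hS : IsCompact S) {x : E} (hx : x ∈ S) :
    ‖x‖ ≤ sSup (norm '' S) :=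
  le_csSup (hS.image continuous_norm).bddAbove ⟨x, hx, rfl⟩

theorem aux_hd_iUnion {m : ℕ} (g : Fin m → E → E) {c : ℝ} (hc : 0 ≤ c)
    (hg : ∀ i x y, dist (g i x) (g i y) ≤ c * dist x y)
    {S T : Set E} (hSc : IsCompact S) (hSne : S.Nonempty)
    (hTc : IsCompact T) (hTne : T.Nonempty) :
    hausdorffDist (⋃ i, g i '' S) (⋃ i, g i '' T) ≤ c * hausdorffDist S T := by
  have hfin : hausdorffEDist S T ≠ ⊤ :=
    hausdorffEdist_ne_top_of_nonempty_of_bounded hSne hTne hSc.isBounded hTc.isBounded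
  have hfin' : hausdorffEDist T S ≠ ⊤ := by
    rwa [EMetric.hausdorffEdist_comm]
  refine hausdorffDist_le_of_mem_dist (mul_nonneg hc hausdorffDist_nonneg) ?_ ?_
  · rintro x hx
    simp only [Set.mem_iUnion, Set.mem_image] at hx
    obtain ⟨i, s, hs, rfl⟩ := hx
    obtain ⟨t, ht, hdt⟩ := hTc.exists_infDist_eq_dist hTne s
    refine ⟨g i t, Set.mem_iUnion.2 ⟨i, ⟨t, ht, rfl⟩⟩, ?_⟩
    calc dist (g i s) (g i t) ≤ c * dist s t := hg i s t
      _ = c * infDist s T := by rw [hdt]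
      _ ≤ c * hausdorffDist S T :=
        mul_le_mul_of_nonneg_left (infDist_le_hausdorffDist_of_mem hs hfin) hc
  · rintro x hx
    simp only [Set.mem_iUnion, Set.mem_image] at hx
    obtain ⟨i, t, ht, rfl⟩ := hx
    obtain ⟨s, hs, hds⟩ := hSc.exists_infDist_eq_dist hSne t
    refine ⟨g i s, Set.mem_iUnion.2 ⟨i, ⟨s, hs, rfl⟩⟩, ?_⟩
    calc dist (g i t) (g i s) ≤ c * dist t s := hg i t s
      _ = c * infDist t S := by rw [hds]
      _ ≤ c * hausdorffDist S T := by
        rw [hausdorffDist_comm]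
        exact mul_le_mul_of_nonneg_left (infDist_le_hausdorffDist_of_mem ht hfin') hc

theorem aux_hd_smul {S : Set E} (hS : IsCompact S) (hSne : S.Nonempty) (c c' : ℝ) :
    hausdorffDist (c • S) (c' • S) ≤ |c - c'| * sSup (norm '' S) := by
  have hR : 0 ≤ sSup (norm '' S) := by
    obtain ⟨x, hx⟩ := hSne
    exact le_trans (norm_nonneg x) (aux_rad_ge hS hx)
  refine hausdorffDist_le_of_mem_dist (by positivity) ?_ ?_
  · rintro x hx
    obtain ⟨s, hs, rfl⟩ := hx
    refine ⟨c' • s, Set.smul_mem_smul_set hs, ?_⟩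
    rw [dist_eq_norm, ← sub_smul, norm_smul, Real.norm_eq_abs]
    exact mul_le_mul_of_nonneg_left (aux_rad_ge hS hs) (abs_nonneg _)
  · rintro x hx
    obtain ⟨s, hs, rfl⟩ := hx
    refine ⟨c • s, Set.smul_mem_smul_set hs, ?_⟩
    rw [dist_eq_norm, ← sub_smul, norm_smul, Real.norm_eq_abs, abs_sub_comm]
    exact mul_le_mul_of_nonneg_left (aux_rad_ge hS hs) (abs_nonneg _)

end Aux

/-- Theorem `theo:renorm`. If the normalizing sequence `(d_n)` of the
renormalized Hutchinson orbit of `K₀` converges to `d > λ_H`, then `(K_n)` converges in the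
Hausdorff metric to the attractor `L_d` of the contractive IFS `{f₁/d, …, f_p/d}`. -/
theorem stmt0 {D p : ℕ}
    (A : Fin (p + 1) → EuclideanSpace ℝ (Fin D) →L[ℝ] EuclideanSpace ℝ (Fin D))
    (b : Fin (p + 1) → EuclideanSpace ℝ (Fin D))
    (f : Fin (p + 1) → EuclideanSpace ℝ (Fin D) → EuclideanSpace ℝ (Fin D))
    (hf : ∀ i x, f i x = A i x + b i)
    (K₀ : Set (EuclideanSpace ℝ (Fin D))) (hK₀c : IsCompact K₀) (hK₀ne : K₀.Nonempty)
    (hpos : ∀ n, 0 < rad (hutch f ((hutchRho f)^[n] K₀)))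
    (d : ℝ) (hdpos : 0 < d)
    (hd : Tendsto (fun n => rad (hutch f ((hutchRho f)^[n] K₀))) atTop (𝓝 d))
    (hdgt : Finset.univ.sup' Finset.univ_nonempty (fun i => ‖A i‖) < d)
    (L : Set (EuclideanSpace ℝ (Fin D))) (hLc : IsCompact L) (hLne : L.Nonempty)
    (hL : d⁻¹ • hutch f L = L) :
    Tendsto (fun n => hausdorffDist ((hutchRho f)^[n] K₀) L) atTop (𝓝 0) := by
  set lam := Finset.univ.sup' Finset.univ_nonempty (fun i => ‖A i‖) with hlam
  have hlamle : ∀ i, ‖A i‖ ≤ lam := by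
    intro i; rw [hlam]; exact Finset.le_sup' (fun j => ‖A j‖) (Finset.mem_univ i)
  have hlam0 : 0 ≤ lam := le_trans (norm_nonneg (A 0)) (hlamle 0)
  set K : ℕ → Set (EuclideanSpace ℝ (Fin D)) := fun n => (hutchRho f)^[n] K₀ with hK
  set dn : ℕ → ℝ := fun n => rad (hutch f (K n)) with hdnd
  have hdnpos : ∀ n, 0 < dn n := hpos
  -- continuity/compactness facts
  have hfc : ∀ i, Continuous (f i) := by
    intro i
    have : f i = fun x => A i x + b i := funext (hf i)
    rw [this]; exact (A i).continuous.add continuous_const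
  have hHc : ∀ S : Set (EuclideanSpace ℝ (Fin D)), IsCompact S → IsCompact (hutch f S) :=
    fun S hS => isCompact_iUnion fun i => hS.image (hfc i)
  have hHne : ∀ S : Set (EuclideanSpace ℝ (Fin D)), S.Nonempty → (hutch f S).Nonempty := by
    rintro S ⟨x, hx⟩
    exact ⟨f 0 x, Set.mem_iUnion.2 ⟨0, ⟨x, hx, rfl⟩⟩⟩
  have hKsucc : ∀ n, K (n + 1) = (dn n)⁻¹ • hutch f (K n) := by
    intro n
    simp only [hK, Function.iterate_succ_apply']
    rfl
  have hKcn : ∀ n, IsCompact (K n) ∧ (K n).Nonempty := by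
    intro n; induction n with
    | zero => exact ⟨hK₀c, hK₀ne⟩
    | succ n ih =>
      rw [hKsucc n]
      exact ⟨(hHc _ ih.1).smul _, (hHne _ ih.2).smul_set⟩
  -- Lipschitz bound for f
  have hfl : ∀ i x y, dist (f i x) (f i y) ≤ lam * dist x y := by
    intro i x y
    rw [hf, hf, dist_eq_norm, dist_eq_norm, add_sub_add_right_eq_sub, ← map_sub]
    exact le_trans ((A i).le_opNorm _) (mul_le_mul_of_nonneg_right (hlamle i) (norm_nonneg _))
  -- rewriting smul of hutch as union of images
  have hsmul_hutch : ∀ (c : ℝ) (S : Set (EuclideanSpace ℝ (Fin D))),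
      c • hutch f S = ⋃ i, (fun x => c • f i x) '' S := by
    intro c S
    unfold hutch
    rw [Set.smul_set_iUnion]
    refine Set.iUnion_congr fun i => ?_
    rw [← Set.image_smul, Set.image_image]
  set S := hutch f L with hS
  have hScomp : IsCompact S := hHc _ hLc
  have hSne : S.Nonempty := hHne _ hLne
  set ε : ℕ → ℝ := fun n => |(dn n)⁻¹ - d⁻¹| * sSup (norm '' S) with hεd
  have hεto : Tendsto ε atTop (𝓝 0) := by
    have h1 : Tendsto (fun n => (dn n)⁻¹ - d⁻¹) atTop (𝓝 0) := by
      simpa using (hd.inv₀ hdpos.ne').sub_const d⁻¹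
    simpa using (h1.abs.mul_const (sSup (norm '' S)))
  set u : ℕ → ℝ := fun n => hausdorffDist (K n) L with hu
  -- key recurrence
  have hrec : ∀ n, u (n + 1) ≤ ((dn n)⁻¹ * lam) * u n + ε n := by
    intro n
    obtain ⟨hKc, hKne⟩ := hKcn n
    have hc0 : 0 ≤ (dn n)⁻¹ * lam := mul_nonneg (inv_nonneg.2 (hdnpos n).le) hlam0
    set g : Fin (p + 1) → EuclideanSpace ℝ (Fin D) → EuclideanSpace ℝ (Fin D) :=
      fun i x => (dn n)⁻¹ • f i x with hg
    have hgl : ∀ i x y, dist (g i x) (g i y) ≤ ((dn n)⁻¹ * lam) * dist x y := by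
      intro i x y
      rw [hg]
      simp only
      rw [dist_smul₀, Real.norm_eq_abs, abs_of_nonneg (inv_nonneg.2 (hdnpos n).le), mul_assoc]
      exact mul_le_mul_of_nonneg_left (hfl i x y) (inv_nonneg.2 (hdnpos n).le)
    set M : Set (EuclideanSpace ℝ (Fin D)) := (dn n)⁻¹ • S with hM
    have hMc : IsCompact M := hScomp.smul _
    have hMne : M.Nonempty := hSne.smul_set
    have hK1 : K (n + 1) = ⋃ i, g i '' K n := by rw [hKsucc n, hsmul_hutch]
    have hMg : M = ⋃ i, g i '' L := by rw [hM, hS, hsmul_hutch]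
    have htri : u (n + 1) ≤ hausdorffDist (K (n + 1)) M + hausdorffDist M L := by
      refine hausdorffDist_triangle ?_
      refine hausdorffEdist_ne_top_of_nonempty_of_bounded ?_ hMne ?_ hMc.isBounded
      · exact (hKcn (n + 1)).2
      · exact (hKcn (n + 1)).1.isBounded
    have h1 : hausdorffDist (K (n + 1)) M ≤ ((dn n)⁻¹ * lam) * u n := by
      rw [hK1, hMg]
      exact aux_hd_iUnion g hc0 hgl hKc hKne hLc hLne
    have h2 : hausdorffDist M L ≤ ε n := by
      calc hausdorffDist M L = hausdorffDist ((dn n)⁻¹ • S) (d⁻¹ • S) := by rw [hM, ← hL, hS]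
        _ ≤ |(dn n)⁻¹ - d⁻¹| * sSup (norm '' S) := aux_hd_smul hScomp hSne _ _
        _ = ε n := rfl
    calc u (n + 1) ≤ hausdorffDist (K (n + 1)) M + hausdorffDist M L := htri
      _ ≤ ((dn n)⁻¹ * lam) * u n + ε n := add_le_add h1 h2
  -- choose q
  set q : ℝ := (lam / d + 1) / 2 with hq
  have hld : lam / d < 1 := (div_lt_one hdpos).2 hdgt
  have hq0 : 0 ≤ q := by positivity
  have hq1 : q < 1 := by rw [hq]; linarith
  have hcoef : ∀ᶠ n in atTop, (dn n)⁻¹ * lam ≤ q := by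
    have hto : Tendsto (fun n => (dn n)⁻¹ * lam) atTop (𝓝 (d⁻¹ * lam)) :=
      (hd.inv₀ hdpos.ne').mul_const lam
    have : d⁻¹ * lam < q := by
      rw [hq]
      have : d⁻¹ * lam = lam / d := by rw [div_eq_inv_mul]
      rw [this]; linarith
    filter_upwards [hto.eventually_lt_const this] with n hn using hn.le
  have hrec' : ∀ᶠ n in atTop, u (n + 1) ≤ q * u n + ε n := by
    filter_upwards [hcoef] with n hn
    calc u (n + 1) ≤ ((dn n)⁻¹ * lam) * u n + ε n := hrec n
      _ ≤ q * u n + ε n := by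
        have := mul_le_mul_of_nonneg_right hn (hausdorffDist_nonneg : 0 ≤ u n)
        linarith
  exact aux_seq u ε q hq0 hq1 (fun n => hausdorffDist_nonneg) hεto hrec'
end
end

section
/- Let p ≥ 1 affine maps f_i(x) = A_i x + b_i on ℝ^D, let K_0 be a nonempty compact subset of ℝ^D, and suppose the normalizing sequence (d_n)_n of the renormalized Hutchinson orbit of K_0 converges to d. Then: (1) for every i ∈ {1,…,p}, ‖b_i‖ ≤ ‖d·Id − A_i‖; (2) for every i such that d is not an eigenvalue of A_i, ‖(d·Id − A_i)^{-1} b_i‖ ≤ 1; (3) if d > λ_H = max_{1≤i≤p} ‖A_i‖, then max_{1≤i≤p} ‖(d·Id − A_i)^{-1} b_i‖ ≤ 1 (all the matrices d·Id − A_i being invertible in this case). -/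
open Metric Filter Pointwise Topology

noncomputable section

/-- Proposition `prop:majd`. If `(d_n)` converges to `d`, then
(1) `‖b_i‖ ≤ ‖d·Id − A_i‖` for all `i`;
(2) if `d` is not an eigenvalue of `A_i` then `‖(d·Id − A_i)⁻¹ b_i‖ ≤ 1` (expressed via the
unique solution `x` of `(d·Id − A_i) x = b_i`);
(3) if `d > λ_H` then this holds for every `i`. -/
theorem stmt2 {D p : ℕ}
    (A : Fin (p + 1) → EuclideanSpace ℝ (Fin D) →L[ℝ] EuclideanSpace ℝ (Fin D))
    (b : Fin (p + 1) → EuclideanSpace ℝ (Fin D))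
    (f : Fin (p + 1) → EuclideanSpace ℝ (Fin D) → EuclideanSpace ℝ (Fin D))
    (hf : ∀ i x, f i x = A i x + b i)
    (K₀ : Set (EuclideanSpace ℝ (Fin D))) (hK₀c : IsCompact K₀) (hK₀ne : K₀.Nonempty)
    (hpos : ∀ n, 0 < rad (hutch f ((hutchRho f)^[n] K₀)))
    (d : ℝ) (hd : Tendsto (fun n => rad (hutch f ((hutchRho f)^[n] K₀))) atTop (𝓝 d)) :
    (∀ i, ‖b i‖ ≤ ‖d • ContinuousLinearMap.id ℝ (EuclideanSpace ℝ (Fin D)) - A i‖) ∧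
    (∀ i, ¬ Module.End.HasEigenvalue ((A i).toLinearMap) d →
      ∀ x, d • x - A i x = b i → ‖x‖ ≤ 1) ∧
    (Finset.univ.sup' Finset.univ_nonempty (fun i => ‖A i‖) < d →
      ∀ i, ∀ x, d • x - A i x = b i → ‖x‖ ≤ 1) := by
  classical
  set Kn : ℕ → Set (EuclideanSpace ℝ (Fin D)) := fun n => (hutchRho f)^[n] K₀ with hKn
  set dn : ℕ → ℝ := fun n => rad (hutch f (Kn n)) with hdn
  have hpos' : ∀ n, 0 < dn n := hpos
  have hd' : Tendsto dn atTop (𝓝 d) := hd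
  have hfc : ∀ i, Continuous (f i) := by
    intro i
    have : f i = fun x => A i x + b i := funext (hf i)
    rw [this]
    exact (A i).continuous.add continuous_const
  have hstep : ∀ n, Kn (n + 1) = (dn n)⁻¹ • hutch f (Kn n) := by
    intro n
    simp only [hKn, Function.iterate_succ_apply']
    rfl
  have hKc : ∀ n, IsCompact (Kn n) := by
    intro n
    induction n with
    | zero => exact hK₀c
    | succ n ih =>
      have hh : IsCompact (hutch f (Kn n)) :=
        isCompact_iUnion fun i => ih.image (hfc i)
      rw [hstep n, ← Set.image_smul]
      exact hh.image (continuous_const_smul _)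
  have hub : ∀ n, ∀ z ∈ hutch f (Kn n), ‖z‖ ≤ dn n := by
    intro n z hz
    have hh : IsCompact (hutch f (Kn n)) :=
      isCompact_iUnion fun i => (hKc n).image (hfc i)
    exact le_csSup (hh.image continuous_norm).bddAbove ⟨z, hz, rfl⟩
  -- The key construction: for each `i`, a sequence `u` of points of norm `≤ 1`
  -- (Cesàro averages of an orbit) with `d • u N - A i (u N) → b i`.
  have key : ∀ i : Fin (p + 1), ∃ u : ℕ → EuclideanSpace ℝ (Fin D),
      (∀ N, ‖u N‖ ≤ 1) ∧
      Tendsto (fun N => d • u N - A i (u N)) atTop (𝓝 (b i)) := by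
    intro i
    obtain ⟨x₀, hx₀⟩ := hK₀ne
    set y : ℕ → EuclideanSpace ℝ (Fin D) := fun n => Nat.rec x₀ (fun n yn => (dn n)⁻¹ • f i yn) n with hy
    have hys : ∀ n, y (n + 1) = (dn n)⁻¹ • f i (y n) := fun n => rfl
    have hmem : ∀ n, y n ∈ Kn n := by
      intro n
      induction n with
      | zero => exact hx₀
      | succ n ih =>
        have h1 : f i (y n) ∈ hutch f (Kn n) :=
          Set.mem_iUnion.2 ⟨i, Set.mem_image_of_mem _ ih⟩
        rw [hys n, hstep n]
        exact Set.smul_mem_smul_set h1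
    have hyb : ∀ n, ‖y (n + 1)‖ ≤ 1 := by
      intro n
      have h1 : f i (y n) ∈ hutch f (Kn n) :=
        Set.mem_iUnion.2 ⟨i, Set.mem_image_of_mem _ (hmem n)⟩
      have h2 := hub n _ h1
      rw [hys n, norm_smul, Real.norm_eq_abs, abs_of_pos (inv_pos.2 (hpos' n))]
      calc (dn n)⁻¹ * ‖f i (y n)‖ ≤ (dn n)⁻¹ * dn n :=
            mul_le_mul_of_nonneg_left h2 (inv_nonneg.2 (hpos' n).le)
        _ = 1 := inv_mul_cancel₀ (hpos' n).ne'
    have hrec : ∀ n, dn n • y (n + 1) = A i (y n) + b i := by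
      intro n
      rw [hys n, smul_inv_smul₀ (hpos' n).ne', hf]
    set v : ℕ → EuclideanSpace ℝ (Fin D) := fun n => y (n + 1) with hv
    have hiden : ∀ n, d • v n - A i (v n)
        = b i + ((d - dn n) • v n + (A i (y n) - A i (y (n + 1)))) := by
      intro n
      have hA : A i (y n) = dn n • v n - b i := eq_sub_of_add_eq (hrec n).symm
      show d • v n - A i (v n) = b i + ((d - dn n) • v n + (A i (y n) - A i (v n)))
      rw [hA, sub_smul]
      abel
    refine ⟨fun N => (N : ℝ)⁻¹ • ∑ n ∈ Finset.range N, v n, ?_, ?_⟩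
    · intro N
      rcases Nat.eq_zero_or_pos N with h | h
      · simp [h]
      · have hsum : ‖∑ n ∈ Finset.range N, v n‖ ≤ (N : ℝ) := by
          calc ‖∑ n ∈ Finset.range N, v n‖ ≤ ∑ n ∈ Finset.range N, ‖v n‖ :=
              norm_sum_le _ _
            _ ≤ ∑ _n ∈ Finset.range N, (1 : ℝ) :=
              Finset.sum_le_sum fun n _ => hyb n
            _ = (N : ℝ) := by simp
        rw [norm_smul, Real.norm_eq_abs, abs_of_nonneg (by positivity)]
        calc (N : ℝ)⁻¹ * ‖∑ n ∈ Finset.range N, v n‖ ≤ (N : ℝ)⁻¹ * N :=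
            mul_le_mul_of_nonneg_left hsum (by positivity)
          _ = 1 := inv_mul_cancel₀ (Nat.cast_ne_zero.2 h.ne')
    · have hsplit : ∀ N : ℕ,
          d • ((N : ℝ)⁻¹ • ∑ n ∈ Finset.range N, v n)
            - A i ((N : ℝ)⁻¹ • ∑ n ∈ Finset.range N, v n)
          = ((N : ℝ)⁻¹ • ∑ n ∈ Finset.range N, (b i : EuclideanSpace ℝ (Fin D)))
            + ((N : ℝ)⁻¹ • ∑ n ∈ Finset.range N, (d - dn n) • v n)
            + ((N : ℝ)⁻¹ • ∑ n ∈ Finset.range N, (A i (y n) - A i (y (n + 1)))) := by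
        intro N
        have e1 : d • ((N : ℝ)⁻¹ • ∑ n ∈ Finset.range N, v n)
            - A i ((N : ℝ)⁻¹ • ∑ n ∈ Finset.range N, v n)
            = (N : ℝ)⁻¹ • ∑ n ∈ Finset.range N, (d • v n - A i (v n)) := by
          rw [smul_comm d ((N : ℝ)⁻¹), map_smul, ← smul_sub, Finset.smul_sum, map_sum,
            ← Finset.sum_sub_distrib]
        rw [e1, Finset.sum_congr rfl fun n _ => hiden n]
        simp [Finset.sum_add_distrib, smul_add, add_assoc]
      have l1 : Tendsto (fun N : ℕ => (N : ℝ)⁻¹ • ∑ n ∈ Finset.range N, (b i : EuclideanSpace ℝ (Fin D)))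
          atTop (𝓝 (b i)) := Filter.Tendsto.cesaro_smul tendsto_const_nhds
      have l2 : Tendsto (fun N : ℕ => (N : ℝ)⁻¹ • ∑ n ∈ Finset.range N, (d - dn n) • v n)
          atTop (𝓝 0) := by
        apply Filter.Tendsto.cesaro_smul
        have h0 : Tendsto (fun n => |d - dn n|) atTop (𝓝 0) := by
          have h1 : Tendsto (fun n => d - dn n) atTop (𝓝 (d - d)) :=
            tendsto_const_nhds.sub hd'
          simpa using h1.abs
        apply squeeze_zero_norm _ h0
        intro n
        rw [norm_smul, Real.norm_eq_abs]
        calc |d - dn n| * ‖v n‖ ≤ |d - dn n| * 1 :=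
            mul_le_mul_of_nonneg_left (hyb n) (abs_nonneg _)
          _ = |d - dn n| := mul_one _
      have l3 : Tendsto (fun N : ℕ => (N : ℝ)⁻¹ •
          ∑ n ∈ Finset.range N, (A i (y n) - A i (y (n + 1)))) atTop (𝓝 0) := by
        have htend : Tendsto (fun N : ℕ => (N : ℝ)⁻¹ * (‖A i (y 0)‖ + ‖A i‖))
            atTop (𝓝 0) := by
          have h1 := tendsto_inv_atTop_nhds_zero_nat.mul_const (‖A i (y 0)‖ + ‖A i‖)
          rw [zero_mul] at h1
          exact h1
        apply squeeze_zero_norm' _ htend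
        filter_upwards [Ici_mem_atTop 1] with N hN
        obtain ⟨m, rfl⟩ : ∃ m, N = m + 1 := ⟨N - 1, by have h1 : 1 ≤ N := hN; omega⟩
        rw [Finset.sum_range_sub' (fun n => A i (y n)), norm_smul, Real.norm_eq_abs,
          abs_of_nonneg (by positivity)]
        have hnorm : ‖A i (y 0) - A i (y (m + 1))‖ ≤ ‖A i (y 0)‖ + ‖A i‖ := by
          calc ‖A i (y 0) - A i (y (m + 1))‖ ≤ ‖A i (y 0)‖ + ‖A i (y (m + 1))‖ :=
              norm_sub_le _ _
            _ ≤ ‖A i (y 0)‖ + ‖A i‖ * 1 := by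
              gcongr
              calc ‖A i (y (m + 1))‖ ≤ ‖A i‖ * ‖y (m + 1)‖ := (A i).le_opNorm _
                _ ≤ ‖A i‖ * 1 := mul_le_mul_of_nonneg_left (hyb m) (norm_nonneg _)
            _ = ‖A i (y 0)‖ + ‖A i‖ := by ring
        exact mul_le_mul_of_nonneg_left hnorm (by positivity)
      have := (l1.add l2).add l3
      rw [add_zero, add_zero] at this
      exact this.congr fun N => (hsplit N).symm
  -- Part (2), proved first since part (3) reduces to it.
  have part2 : ∀ i, ¬ Module.End.HasEigenvalue ((A i).toLinearMap) d →
      ∀ x, d • x - A i x = b i → ‖x‖ ≤ 1 := by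
    intro i hno x hx
    obtain ⟨u, hu1, hu2⟩ := key i
    have hmem : ∀ N, u N ∈ Metric.closedBall (0 : EuclideanSpace ℝ (Fin D)) 1 := fun N =>
      mem_closedBall_zero_iff.2 (hu1 N)
    obtain ⟨w, hw, φ, hφ, hconv⟩ :=
      (isCompact_closedBall (0 : EuclideanSpace ℝ (Fin D)) 1).tendsto_subseq hmem
    have hcont : Continuous fun z : EuclideanSpace ℝ (Fin D) => d • z - A i z :=
      (continuous_const_smul d).sub (A i).continuous
    have hlim1 : Tendsto (fun k => d • u (φ k) - A i (u (φ k))) atTop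
        (𝓝 (d • w - A i w)) := (hcont.tendsto w).comp hconv
    have hlim2 : Tendsto (fun k => d • u (φ k) - A i (u (φ k))) atTop (𝓝 (b i)) :=
      hu2.comp hφ.tendsto_atTop
    have hw2 : d • w - A i w = b i := tendsto_nhds_unique hlim1 hlim2
    by_cases hxw : x = w
    · rw [hxw]
      exact mem_closedBall_zero_iff.1 hw
    · exfalso
      apply hno
      have h' : d • x - A i x = d • w - A i w := hx.trans hw2.symm
      have h2 : d • x - d • w = A i x - A i w := sub_eq_sub_iff_sub_eq_sub.1 h'
      have hev : (A i).toLinearMap (x - w) = d • (x - w) := by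
        show A i (x - w) = d • (x - w)
        rw [map_sub, smul_sub, ← h2]
      exact Module.End.hasEigenvalue_of_hasEigenvector
        ⟨Module.End.mem_eigenspace_iff.2 hev, sub_ne_zero.2 hxw⟩
  refine ⟨?_, part2, ?_⟩
  · -- Part (1)
    intro i
    obtain ⟨u, hu1, hu2⟩ := key i
    set T : EuclideanSpace ℝ (Fin D) →L[ℝ] EuclideanSpace ℝ (Fin D) := d • ContinuousLinearMap.id ℝ (EuclideanSpace ℝ (Fin D)) - A i with hT
    have hTa : ∀ z, T z = d • z - A i z := by
      intro z
      simp [hT, ContinuousLinearMap.sub_apply, ContinuousLinearMap.smul_apply]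
    have hb : Tendsto (fun N => ‖d • u N - A i (u N)‖) atTop (𝓝 ‖b i‖) := hu2.norm
    refine le_of_tendsto hb (Filter.Eventually.of_forall fun N => ?_)
    calc ‖d • u N - A i (u N)‖ = ‖T (u N)‖ := by rw [hTa]
      _ ≤ ‖T‖ * ‖u N‖ := T.le_opNorm _
      _ ≤ ‖T‖ * 1 := mul_le_mul_of_nonneg_left (hu1 N) (norm_nonneg _)
      _ = ‖T‖ := mul_one _
  · -- Part (3)
    intro hmax i x hx
    refine part2 i ?_ x hx
    intro hev
    obtain ⟨z, hz⟩ := hev.exists_hasEigenvector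
    have hzne : z ≠ 0 := hz.2
    have hAz : A i z = d • z := hz.apply_eq_smul
    have hAid : ‖A i‖ < d :=
      lt_of_le_of_lt (Finset.le_sup' (fun j => ‖A j‖) (Finset.mem_univ i)) hmax
    have hzpos : 0 < ‖z‖ := norm_pos_iff.2 hzne
    have : d * ‖z‖ ≤ ‖A i‖ * ‖z‖ := by
      calc d * ‖z‖ = ‖d • z‖ := by
            rw [norm_smul, Real.norm_eq_abs, abs_of_pos
              (lt_of_le_of_lt (norm_nonneg (A i)) hAid)]
        _ = ‖A i z‖ := by rw [hAz]
        _ ≤ ‖A i‖ * ‖z‖ := (A i).le_opNorm _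
    nlinarith
end
end

section
/- Let p ≥ 1 affine maps f_i(x) = A_i x + b_i on ℝ^D with ‖A_i‖ < 1 for all i ∈ {1,…,p}. Let z_i denote the unique fixed point of f_i and let L be the attractor of the IFS {f_1,…,f_p}. If f_j(z_i) belongs to the convex hull of {z_1,…,z_p} for all i, j ∈ {1,…,p}, then the convex hull of L equals the convex hull of {z_1,…,z_p}. -/
open Metric Filter Pointwise Topology

noncomputable section

/-- Lemma `lem:convhull`. For contractive affine maps `f_i = A_i · + b_i`
with fixed points `z_i` and attractor `L`, if `f_j(z_i)` lies in the convex hull of the fixed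
points for all `i, j`, then the convex hull of `L` is the polytope `conv{z_1, …, z_p}`. -/
theorem stmt3 {D p : ℕ}
    (A : Fin (p + 1) → EuclideanSpace ℝ (Fin D) →L[ℝ] EuclideanSpace ℝ (Fin D))
    (b : Fin (p + 1) → EuclideanSpace ℝ (Fin D))
    (f : Fin (p + 1) → EuclideanSpace ℝ (Fin D) → EuclideanSpace ℝ (Fin D))
    (hf : ∀ i x, f i x = A i x + b i)
    (hA : ∀ i, ‖A i‖ < 1)
    (z : Fin (p + 1) → EuclideanSpace ℝ (Fin D))
    (hz : ∀ i, f i (z i) = z i)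
    (L : Set (EuclideanSpace ℝ (Fin D))) (hLc : IsCompact L) (hLne : L.Nonempty)
    (hL : hutch f L = L)
    (hconv : ∀ i j, f j (z i) ∈ convexHull ℝ (Set.range z)) :
    convexHull ℝ L = convexHull ℝ (Set.range z) := by
  set P : Set (EuclideanSpace ℝ (Fin D)) := convexHull ℝ (Set.range z) with hP
  -- basic Lipschitz estimate
  have hlip : ∀ i (x y : EuclideanSpace ℝ (Fin D)), dist (f i x) (f i y) ≤ ‖A i‖ * dist x y := by
    intro i x y
    have h1 : f i x - f i y = A i (x - y) := by
      rw [hf, hf, map_sub]; abel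
    rw [dist_eq_norm, dist_eq_norm, h1]
    exact (A i).le_opNorm _
  -- f i maps L into L
  have hfL : ∀ i, ∀ x ∈ L, f i x ∈ L := by
    intro i x hx
    rw [← hL]
    exact Set.mem_iUnion.2 ⟨i, ⟨x, hx, rfl⟩⟩
  -- each z i belongs to L
  have hzL : ∀ i, z i ∈ L := by
    intro i
    obtain ⟨y, hyL, hy⟩ := hLc.exists_infDist_eq_dist hLne (z i)
    have h1 : infDist (z i) L ≤ dist (z i) (f i y) :=
      infDist_le_dist_of_mem (hfL i y hyL)
    have h2 : dist (z i) (f i y) ≤ ‖A i‖ * dist (z i) y := by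
      calc dist (z i) (f i y) = dist (f i (z i)) (f i y) := by rw [hz]
        _ ≤ ‖A i‖ * dist (z i) y := hlip i _ _
    have h3 : infDist (z i) L ≤ ‖A i‖ * infDist (z i) L := by
      have h4 := h1.trans h2
      rwa [← hy] at h4
    have h0 : infDist (z i) L = 0 := by
      nlinarith [infDist_nonneg (x := z i) (s := L), hA i]
    exact (hLc.isClosed.mem_iff_infDist_zero hLne).2 h0
  -- P is compact, convex, nonempty
  have hPc : IsCompact P := (Set.finite_range z).isCompact_convexHull (𝕜 := ℝ)
  have hPconv : Convex ℝ P := convex_convexHull ℝ _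
  have hPne : P.Nonempty := ⟨z 0, subset_convexHull ℝ _ ⟨0, rfl⟩⟩
  -- f i maps P into P
  have hfP : ∀ i, ∀ x ∈ P, f i x ∈ P := by
    intro i x hx
    have F : EuclideanSpace ℝ (Fin D) →ᵃ[ℝ] EuclideanSpace ℝ (Fin D) := AffineMap.mk' (f i) ((A i : EuclideanSpace ℝ (Fin D) →ₗ[ℝ] EuclideanSpace ℝ (Fin D))) 0
      (by intro x'; simp [hf])
    have him : f i '' P = convexHull ℝ (f i '' Set.range z) := by
      have := (AffineMap.mk' (f i) ((A i : EuclideanSpace ℝ (Fin D) →ₗ[ℝ] EuclideanSpace ℝ (Fin D))) 0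
        (by intro x'; simp [hf])).image_convexHull (Set.range z)
      simpa using this
    have hsub : f i '' Set.range z ⊆ P := by
      rintro _ ⟨_, ⟨j, rfl⟩, rfl⟩
      exact hconv j i
    have : f i '' P ⊆ P := by
      rw [him]; exact convexHull_min hsub hPconv
    exact this ⟨x, hx, rfl⟩
  -- L ⊆ P via maximum of infDist · P on L
  have hLP : L ⊆ P := by
    obtain ⟨x0, hx0L, hmax⟩ :=
      hLc.exists_isMaxOn hLne (continuous_infDist_pt P).continuousOn
    have hx0' : x0 ∈ hutch f L := by rw [hL]; exact hx0L
    obtain ⟨i, x, hxL, hfx⟩ : ∃ i x, x ∈ L ∧ f i x = x0 := by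
      rcases Set.mem_iUnion.1 hx0' with ⟨i, x, hxL, hfx⟩
      exact ⟨i, x, hxL, hfx⟩
    obtain ⟨y, hyP, hy⟩ := hPc.exists_infDist_eq_dist hPne x
    have h1 : infDist x0 P ≤ dist (f i x) (f i y) := by
      rw [← hfx]; exact infDist_le_dist_of_mem (hfP i y hyP)
    have h2 : dist (f i x) (f i y) ≤ ‖A i‖ * infDist x P := by
      rw [hy]; exact hlip i _ _
    have h3 : infDist x P ≤ infDist x0 P := hmax hxL
    have h4 : infDist x0 P ≤ ‖A i‖ * infDist x0 P := by
      calc infDist x0 P ≤ ‖A i‖ * infDist x P := h1.trans h2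
        _ ≤ ‖A i‖ * infDist x0 P :=
          mul_le_mul_of_nonneg_left h3 (norm_nonneg _)
    have h0 : infDist x0 P = 0 := by
      nlinarith [infDist_nonneg (x := x0) (s := P), hA i]
    intro w hwL
    have : infDist w P = 0 :=
      le_antisymm (h0 ▸ hmax hwL) infDist_nonneg
    exact (hPc.isClosed.mem_iff_infDist_zero hPne).2 this
  -- conclude
  refine Set.Subset.antisymm (convexHull_min hLP hPconv) ?_
  exact convexHull_mono (fun w ⟨i, hi⟩ => hi ▸ hzL i)
end
end

section
/- Let p ≥ 1 affine maps f_i(x) = A_i x + b_i on ℝ^D, let K_0 be a nonempty compact subset of ℝ^D, and suppose the normalizing sequence (d_n)_n of the renormalized Hutchinson orbit of K_0 converges to d with d > λ_H = max_{1≤i≤p} ‖A_i‖. Then ρ({(d·Id − A_1)^{-1} b_1, …, (d·Id − A_p)^{-1} b_p}) ≤ 1. Moreover, if A_i = α_i·Id with α_i ≥ 0 for all i ∈ {1,…,p}, then this inequality is an equality, and in this case at least one b_i is nonzero. -/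
open Metric Filter Pointwise Topology

noncomputable section

lemma aux_rad_le {D : ℕ} {K : Set (EuclideanSpace ℝ (Fin D))} (hK : IsCompact K)
    {x : EuclideanSpace ℝ (Fin D)} (hx : x ∈ K) : ‖x‖ ≤ rad K :=
  le_csSup ((hK.image continuous_norm).bddAbove) ⟨x, hx, rfl⟩

lemma aux_rad_smul {D : ℕ} {K : Set (EuclideanSpace ℝ (Fin D))} (hK : IsCompact K)
    (hne : K.Nonempty) {c : ℝ} (hc : 0 ≤ c) : rad (c • K) = c * rad K := by
  obtain ⟨x₀, hx₀, hmax⟩ := hK.exists_isMaxOn hne continuous_norm.continuousOn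
  have h1 : rad K = ‖x₀‖ := by
    refine le_antisymm (Real.sSup_le ?_ (norm_nonneg _)) (aux_rad_le hK hx₀)
    rintro r ⟨y, hy, rfl⟩; exact hmax hy
  have h2 : rad (c • K) = ‖c • x₀‖ := by
    refine le_antisymm (Real.sSup_le ?_ (norm_nonneg _))
      (aux_rad_le (hK.smul c) (Set.smul_mem_smul_set hx₀))
    rintro r ⟨y, hy, rfl⟩
    obtain ⟨z, hz, rfl⟩ := hy
    rw [norm_smul, norm_smul]
    exact mul_le_mul_of_nonneg_left (hmax hz) (norm_nonneg c)
  rw [h1, h2, norm_smul, Real.norm_eq_abs, abs_of_nonneg hc]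

lemma aux_hutch_compact {D p : ℕ}
    (f : Fin (p + 1) → EuclideanSpace ℝ (Fin D) → EuclideanSpace ℝ (Fin D))
    (hfc : ∀ i, Continuous (f i)) {K : Set (EuclideanSpace ℝ (Fin D))} (hK : IsCompact K) :
    IsCompact (hutch f K) :=
  isCompact_iUnion fun i => hK.image (hfc i)

lemma aux_hutch_ne {D p : ℕ}
    (f : Fin (p + 1) → EuclideanSpace ℝ (Fin D) → EuclideanSpace ℝ (Fin D))
    {K : Set (EuclideanSpace ℝ (Fin D))} (hK : K.Nonempty) : (hutch f K).Nonempty :=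
  ⟨f 0 hK.choose, Set.mem_iUnion.2 ⟨0, Set.mem_image_of_mem _ hK.choose_spec⟩⟩

/-- Proposition `prop:limerho`. If `(d_n)` converges to `d > λ_H` then
`ρ({(d·Id − A_1)⁻¹b_1, …, (d·Id − A_p)⁻¹b_p}) ≤ 1` (the set of the solutions `x` of the
equations `(d·Id − A_i) x = b_i`); moreover if all `A_i = α_i·Id` with `α_i ≥ 0` then this
inequality is an equality and at least one `b_i` is nonzero. -/
theorem stmt4 {D p : ℕ}
    (A : Fin (p + 1) → EuclideanSpace ℝ (Fin D) →L[ℝ] EuclideanSpace ℝ (Fin D))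
    (b : Fin (p + 1) → EuclideanSpace ℝ (Fin D))
    (f : Fin (p + 1) → EuclideanSpace ℝ (Fin D) → EuclideanSpace ℝ (Fin D))
    (hf : ∀ i x, f i x = A i x + b i)
    (K₀ : Set (EuclideanSpace ℝ (Fin D))) (hK₀c : IsCompact K₀) (hK₀ne : K₀.Nonempty)
    (hpos : ∀ n, 0 < rad (hutch f ((hutchRho f)^[n] K₀)))
    (d : ℝ) (hd : Tendsto (fun n => rad (hutch f ((hutchRho f)^[n] K₀))) atTop (𝓝 d))
    (hdgt : Finset.univ.sup' Finset.univ_nonempty (fun i => ‖A i‖) < d) :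
    rad {x | ∃ i, d • x - A i x = b i} ≤ 1 ∧
    ((∃ α : Fin (p + 1) → ℝ, (∀ i, 0 ≤ α i) ∧
        ∀ i, A i = α i • ContinuousLinearMap.id ℝ (EuclideanSpace ℝ (Fin D))) →
      rad {x | ∃ i, d • x - A i x = b i} = 1 ∧ ∃ i, b i ≠ 0) := by
  have hfc : ∀ i, Continuous (f i) := by
    intro i
    have : f i = fun x => A i x + b i := funext (hf i)
    rw [this]
    exact (A i).continuous.add continuous_const
  set Kn : ℕ → Set (EuclideanSpace ℝ (Fin D)) := fun n => (hutchRho f)^[n] K₀ with hKn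
  set dn : ℕ → ℝ := fun n => rad (hutch f (Kn n)) with hdn
  have hKnc : ∀ n, IsCompact (Kn n) ∧ (Kn n).Nonempty := by
    intro n
    induction n with
    | zero => exact ⟨hK₀c, hK₀ne⟩
    | succ n ih =>
      have h : Kn (n+1) = hutchRho f (Kn n) := Function.iterate_succ_apply' _ _ _
      rw [h, hutchRho]
      exact ⟨(aux_hutch_compact f hfc ih.1).smul _,
        (aux_hutch_ne f ih.2).smul_set⟩
  have hKnsucc : ∀ n, Kn (n+1) = (dn n)⁻¹ • hutch f (Kn n) :=
    fun n => Function.iterate_succ_apply' _ _ _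
  have hdnpos : ∀ n, 0 < dn n := hpos
  have hdnd : Tendsto dn atTop (𝓝 d) := hd
  have hrad1 : ∀ n, rad (Kn (n+1)) = 1 := by
    intro n
    rw [hKnsucc n, aux_rad_smul (aux_hutch_compact f hfc (hKnc n).1) (aux_hutch_ne f (hKnc n).2)
      (inv_nonneg.2 (hdnpos n).le)]
    exact inv_mul_cancel₀ (hdnpos n).ne'
  have hnorm_le : ∀ n x, x ∈ Kn (n+1) → ‖x‖ ≤ 1 := by
    intro n x hx
    have h := aux_rad_le (hKnsucc n ▸ (aux_hutch_compact f hfc (hKnc n).1).smul _) hx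
    rwa [hrad1 n] at h
  have hfd : ∀ n i y, y ∈ Kn n → ‖A i y + b i‖ ≤ dn n := by
    intro n i y hy
    have hmem : f i y ∈ hutch f (Kn n) := Set.mem_iUnion.2 ⟨i, Set.mem_image_of_mem _ hy⟩
    have := aux_rad_le (aux_hutch_compact f hfc (hKnc n).1) hmem
    rwa [hf] at this
  set lam : ℝ := Finset.univ.sup' Finset.univ_nonempty (fun i => ‖A i‖) with hlam
  have hlamnn : (0:ℝ) ≤ lam := le_trans (norm_nonneg (A 0)) (Finset.le_sup' (fun i => ‖A i‖) (Finset.mem_univ (0 : Fin (p+1))))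
  have hdpos : 0 < d := lt_of_le_of_lt hlamnn hdgt
  -- main pointwise bound
  have key : ∀ x : EuclideanSpace ℝ (Fin D), (∃ i, d • x - A i x = b i) → ‖x‖ ≤ 1 := by
    rintro x ⟨i, hxi⟩
    have hdx : d • x = A i x + b i := by
      have := sub_eq_iff_eq_add.mp hxi; rw [this]; abel
    -- the auxiliary orbit
    set y : ℕ → EuclideanSpace ℝ (Fin D) :=
      fun n => Nat.rec hK₀ne.choose (fun n yn => (dn n)⁻¹ • f i yn) n with hy_def
    have hy0 : y 0 = hK₀ne.choose := rfl
    have hysucc : ∀ n, y (n+1) = (dn n)⁻¹ • f i (y n) := fun n => rfl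
    have hy : ∀ n, y n ∈ Kn n := by
      intro n
      induction n with
      | zero => exact hK₀ne.choose_spec
      | succ n ih =>
        rw [hysucc n, hKnsucc n]
        exact Set.smul_mem_smul_set (Set.mem_iUnion.2 ⟨i, Set.mem_image_of_mem _ ih⟩)
    have hy1 : ∀ n, ‖y (n+1)‖ ≤ 1 := fun n => hnorm_le n _ (hy (n+1))
    set e : ℕ → ℝ := fun n => ‖y n - x‖ with he_def
    have hrec : ∀ n, e (n+1) ≤ (dn n)⁻¹ * ‖A i‖ * e n + |(dn n)⁻¹ - d⁻¹| * ‖A i x + b i‖ := by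
      intro n
      have hx' : x = d⁻¹ • (A i x + b i) := by
        rw [← hdx, smul_smul, inv_mul_cancel₀ hdpos.ne', one_smul]
      have h1 : y (n+1) - x
          = (dn n)⁻¹ • (A i (y n) - A i x) + ((dn n)⁻¹ - d⁻¹) • (A i x + b i) := by
        calc y (n+1) - x = (dn n)⁻¹ • (A i (y n) + b i) - d⁻¹ • (A i x + b i) := by
              rw [hysucc n, hf, ← hx']
          _ = (dn n)⁻¹ • (A i (y n) - A i x) + ((dn n)⁻¹ - d⁻¹) • (A i x + b i) := by
              module
      have h2 : e (n+1) ≤ ‖(dn n)⁻¹ • (A i (y n) - A i x)‖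
          + ‖((dn n)⁻¹ - d⁻¹) • (A i x + b i)‖ := by
        rw [he_def]; dsimp only; rw [h1]; exact norm_add_le _ _
      have h3 : ‖(dn n)⁻¹ • (A i (y n) - A i x)‖ ≤ (dn n)⁻¹ * ‖A i‖ * e n := by
        rw [norm_smul, Real.norm_eq_abs, abs_of_pos (inv_pos.2 (hdnpos n)), ← map_sub,
          mul_assoc]
        exact mul_le_mul_of_nonneg_left ((A i).le_opNorm _) (inv_nonneg.2 (hdnpos n).le)
      have h4 : ‖((dn n)⁻¹ - d⁻¹) • (A i x + b i)‖ = |(dn n)⁻¹ - d⁻¹| * ‖A i x + b i‖ := by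
        rw [norm_smul, Real.norm_eq_abs]
      calc e (n+1) ≤ _ + _ := h2
        _ ≤ (dn n)⁻¹ * ‖A i‖ * e n + |(dn n)⁻¹ - d⁻¹| * ‖A i x + b i‖ := by
            rw [h4]; exact add_le_add h3 le_rfl
    -- epsilon dance
    refine le_of_forall_pos_le_add ?_
    intro z hz
    set q : ℝ := (lam / d + 1) / 2 with hq_def
    have hlamd : lam / d < 1 := (div_lt_one hdpos).2 hdgt
    have hq1 : q < 1 := by rw [hq_def]; linarith
    have hq0 : 0 < q := by
      have : 0 ≤ lam / d := div_nonneg hlamnn hdpos.le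
      rw [hq_def]; linarith
    have hlamq : lam < q * d := by
      have : lam / d < q := by rw [hq_def]; linarith
      exact (div_lt_iff₀ hdpos).1 this
    have h1q : 0 < 1 - q := by linarith
    set eps : ℝ := z * (1 - q) with heps_def
    have heps : 0 < eps := mul_pos hz h1q
    have hev1 : ∀ᶠ n in atTop, lam < q * dn n :=
      (Tendsto.const_mul q hdnd).eventually_const_lt hlamq
    have hev2 : ∀ᶠ n in atTop, |(dn n)⁻¹ - d⁻¹| * ‖A i x + b i‖ < eps := by
      have ht : Tendsto (fun n => |(dn n)⁻¹ - d⁻¹| * ‖A i x + b i‖) atTop (𝓝 0) := by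
        have h5 : Tendsto (fun n => (dn n)⁻¹ - d⁻¹) atTop (𝓝 0) := by
          have := (hdnd.inv₀ hdpos.ne').sub_const d⁻¹
          simpa using this
        have h6 : Tendsto (fun n => |(dn n)⁻¹ - d⁻¹|) atTop (𝓝 0) := by
          simpa using h5.abs
        simpa using h6.mul_const ‖A i x + b i‖
      exact ht.eventually_lt_const heps
    obtain ⟨N₀, hN₀⟩ := eventually_atTop.1 (hev1.and hev2)
    set N : ℕ := N₀ + 1 with hN_def
    set C : ℝ := e N with hC_def
    have hC0 : 0 ≤ C := norm_nonneg _
    have hεq0 : 0 ≤ eps / (1 - q) := div_nonneg heps.le h1q.le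
    have hiter : ∀ k, e (N + k) ≤ q ^ k * C + eps / (1 - q) := by
      intro k
      induction k with
      | zero => simpa using by linarith [hεq0] 
      | succ k ih =>
        have hn : N₀ ≤ N + k := by omega
        obtain ⟨hq_dn, hnoise⟩ := hN₀ _ hn
        have hAi : ‖A i‖ ≤ lam := Finset.le_sup' (fun j => ‖A j‖) (Finset.mem_univ i)
        have hdninv : (dn (N+k))⁻¹ * ‖A i‖ ≤ q := by
          have h7 : (dn (N+k))⁻¹ * ‖A i‖ ≤ (dn (N+k))⁻¹ * (q * dn (N+k)) :=
            mul_le_mul_of_nonneg_left (hAi.trans hq_dn.le) (inv_nonneg.2 (hdnpos _).le)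
          have h8 : (dn (N+k))⁻¹ * (q * dn (N+k)) = q := by
            rw [mul_comm q, ← mul_assoc, inv_mul_cancel₀ (hdnpos _).ne', one_mul]
          linarith
        have e_nn : 0 ≤ e (N+k) := norm_nonneg _
        have step1 : e (N+k+1) ≤ q * e (N+k) + eps := by
          calc e (N+k+1) ≤ (dn (N+k))⁻¹ * ‖A i‖ * e (N+k)
              + |(dn (N+k))⁻¹ - d⁻¹| * ‖A i x + b i‖ := hrec _
            _ ≤ q * e (N+k) + eps :=
              add_le_add (mul_le_mul_of_nonneg_right hdninv e_nn) hnoise.le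
        have step2 : q * e (N+k) ≤ q * (q ^ k * C + eps / (1-q)) :=
          mul_le_mul_of_nonneg_left ih hq0.le
        have step3 : q * (q ^ k * C + eps / (1-q)) + eps = q ^ (k+1) * C + eps / (1-q) := by
          field_simp
          ring
        calc e (N+k+1) ≤ q * e (N+k) + eps := step1
          _ ≤ q * (q ^ k * C + eps / (1-q)) + eps := by linarith
          _ = q ^ (k+1) * C + eps / (1-q) := step3
    have hxk : ∀ k, ‖x‖ ≤ 1 + (q ^ k * C + eps / (1-q)) := by
      intro k
      have h9 : ‖x‖ ≤ ‖y (N+k)‖ + e (N+k) := by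
        have h := norm_add_le (y (N+k)) (x - y (N+k))
        rw [add_sub_cancel] at h
        rw [he_def]; dsimp only
        rw [norm_sub_rev]
        exact h
      have h10 : ‖y (N+k)‖ ≤ 1 := by
        have : N + k = (N₀ + k) + 1 := by omega
        rw [this]; exact hy1 _
      linarith [hiter k]
    have hlim : Tendsto (fun k => 1 + (q ^ k * C + eps / (1-q))) atTop
        (𝓝 (1 + (0 * C + eps / (1-q)))) := by
      exact ((((tendsto_pow_atTop_nhds_zero_of_lt_one hq0.le hq1).mul_const C).add_const
        (eps / (1-q))).const_add 1)
    have h11 : ‖x‖ ≤ 1 + (0 * C + eps / (1-q)) := ge_of_tendsto hlim (Eventually.of_forall hxk)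
    have h12 : eps / (1 - q) = z := by
      rw [heps_def]; field_simp
    rw [zero_mul, zero_add, h12] at h11
    exact h11

  refine ⟨Real.sSup_le ?_ zero_le_one, ?_⟩
  · rintro r ⟨x, hx, rfl⟩; exact key x hx
  · rintro ⟨α, hα0, hαA⟩
    rcases Nat.eq_zero_or_pos D with hD | hD
    · exfalso
      subst hD
      have h0 : rad (hutch f K₀) ≤ 0 := by
        refine Real.sSup_le ?_ le_rfl
        rintro r ⟨x, hx, rfl⟩
        simp [Subsingleton.elim x 0]
      have := hpos 0
      simp only [Function.iterate_zero, id_eq] at this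
      linarith
    haveI : Nonempty (Fin D) := Fin.pos_iff_nonempty.mp hD
    haveI : Nontrivial (EuclideanSpace ℝ (Fin D)) := by infer_instance
    have hnormA : ∀ i, ‖A i‖ = α i := by
      intro i
      have hns := norm_smul (α := ℝ) (β := EuclideanSpace ℝ (Fin D) →L[ℝ] EuclideanSpace ℝ (Fin D))
        (α i) (ContinuousLinearMap.id ℝ (EuclideanSpace ℝ (Fin D)))
      rw [hαA i, hns, ContinuousLinearMap.norm_id, mul_one, Real.norm_eq_abs,
        abs_of_nonneg (hα0 i)]
    have hαd : ∀ i, α i < d := by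
      intro i
      calc α i = ‖A i‖ := (hnormA i).symm
        _ ≤ lam := Finset.le_sup' (fun j => ‖A j‖) (Finset.mem_univ i)
        _ < d := hdgt
    set M : ℝ := Finset.univ.sup' Finset.univ_nonempty (fun i => α i + ‖b i‖) with hM_def
    have hub : ∀ n, dn (n+1) ≤ M := by
      intro n
      have hM0 : 0 ≤ M :=
        le_trans (add_nonneg (hα0 0) (norm_nonneg (b 0)))
          (Finset.le_sup' (fun i => α i + ‖b i‖) (Finset.mem_univ (0 : Fin (p+1))))
      refine Real.sSup_le ?_ hM0
      rintro r ⟨z, hz, rfl⟩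
      obtain ⟨j, y, hy, rfl⟩ : ∃ j y, y ∈ Kn (n+1) ∧ f j y = z := by
        rw [hutch] at hz
        obtain ⟨j, y, hy, rfl⟩ := Set.mem_iUnion.1 hz
        exact ⟨j, y, hy, rfl⟩
      rw [hf]
      have h1 : ‖A j y‖ ≤ α j := by
        calc ‖A j y‖ ≤ ‖A j‖ * ‖y‖ := (A j).le_opNorm y
          _ ≤ ‖A j‖ * 1 := mul_le_mul_of_nonneg_left (hnorm_le n y hy) (norm_nonneg _)
          _ = α j := by rw [mul_one, hnormA]
      calc ‖A j y + b j‖ ≤ ‖A j y‖ + ‖b j‖ := norm_add_le _ _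
        _ ≤ α j + ‖b j‖ := add_le_add h1 le_rfl
        _ ≤ M := Finset.le_sup' (fun i => α i + ‖b i‖) (Finset.mem_univ j)
    have hdM : d ≤ M := by
      have hd' : Tendsto (fun n => dn (n+1)) atTop (𝓝 d) :=
        hdnd.comp (tendsto_add_atTop_nat 1)
      exact le_of_tendsto hd' (Eventually.of_forall hub)
    obtain ⟨j, hj⟩ : ∃ j, d ≤ α j + ‖b j‖ := by
      obtain ⟨j, _, hj⟩ := Finset.exists_mem_eq_sup' Finset.univ_nonempty
        (fun i => α i + ‖b i‖)
      exact ⟨j, by rw [← hj]; exact hdM⟩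
    have hdaj : 0 < d - α j := by linarith [hαd j]
    have hbj : d - α j ≤ ‖b j‖ := by linarith
    set x : EuclideanSpace ℝ (Fin D) := (d - α j)⁻¹ • b j with hx_def
    have hAx : ∀ i z, A i z = α i • z := by
      intro i z; rw [hαA i]; rfl
    have hxS : d • x - A j x = b j := by
      rw [hAx, ← sub_smul, hx_def, smul_smul, mul_inv_cancel₀ hdaj.ne', one_smul]
    have hx1 : 1 ≤ ‖x‖ := by
      have h1 : (d - α j)⁻¹ * (d - α j) ≤ (d - α j)⁻¹ * ‖b j‖ :=
        mul_le_mul_of_nonneg_left hbj (inv_nonneg.2 hdaj.le)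
      rw [inv_mul_cancel₀ hdaj.ne'] at h1
      rw [hx_def, norm_smul, Real.norm_eq_abs, abs_of_pos (inv_pos.2 hdaj)]
      exact h1
    have hss : {x | ∃ i, d • x - A i x = b i} ⊆ Set.range (fun i => (d - α i)⁻¹ • b i) := by
      rintro z ⟨i, hzi⟩
      refine ⟨i, ?_⟩
      rw [hAx, ← sub_smul] at hzi
      have hdai : (d - α i) ≠ 0 := sub_ne_zero.mpr (hαd i).ne'
      show (d - α i)⁻¹ • b i = z
      rw [← hzi, smul_smul, inv_mul_cancel₀ hdai, one_smul]
    have hSfin : {x | ∃ i, d • x - A i x = b i}.Finite :=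
      (Set.finite_range _).subset hss
    have hbdd : BddAbove (norm '' {x | ∃ i, d • x - A i x = b i}) :=
      (hSfin.image norm).bddAbove
    have hge : ‖x‖ ≤ rad {x | ∃ i, d • x - A i x = b i} :=
      le_csSup hbdd ⟨x, ⟨j, hxS⟩, rfl⟩
    refine ⟨le_antisymm (Real.sSup_le ?_ zero_le_one) (le_trans hx1 hge), ⟨j, ?_⟩⟩
    · rintro r ⟨w, hw, rfl⟩; exact key w hw
    · intro hbj0
      rw [hbj0, norm_zero] at hbj
      linarith
end
end

section
/- Let p ≥ 1 affine maps f_i(x) = α_i x + b_i on ℝ^D with α_i ≥ 0 (homothety linear parts), let j be an index with α_j = max_{1≤i≤p} α_i, let K_0 be a nonempty compact subset of ℝ^D, and let (d_n)_n be the normalizing sequence of the renormalized Hutchinson orbit of K_0. Then (d_n)_n converges to some d > 0. If d = α_j then b_j = 0; otherwise d ≠ α_j and: if d > α_j then d = max_{1≤i≤p}(α_i + ‖b_i‖), while if d < α_j then d = α_j − ‖b_j‖. -/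
open Metric Filter Pointwise Topology

noncomputable section

set_option linter.unusedVariables false
set_option linter.unusedSectionVars false
set_option maxHeartbeats 1000000
set_option linter.unusedSectionVars false

namespace Stmt5Aux

abbrev ES (D : ℕ) : Type := EuclideanSpace ℝ (Fin D)

variable {D p : ℕ}

lemma norm_le_rad {K : Set (ES D)} (hK : IsCompact K) {x : ES D} (hx : x ∈ K) : ‖x‖ ≤ rad K :=
  le_csSup (hK.image continuous_norm).bddAbove ⟨x, hx, rfl⟩

lemma exists_norm_eq_rad {K : Set (ES D)} (hK : IsCompact K) (hne : K.Nonempty) :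
    ∃ x ∈ K, ‖x‖ = rad K := by
  obtain ⟨x, hx, hxe⟩ := (hK.image continuous_norm).sSup_mem (hne.image _)
  exact ⟨x, hx, hxe⟩

lemma mem_hutch {f : Fin (p+1) → ES D → ES D} {K : Set (ES D)} (i : Fin (p+1)) {x : ES D}
    (hx : x ∈ K) : f i x ∈ hutch f K :=
  Set.mem_iUnion.2 ⟨i, Set.mem_image_of_mem _ hx⟩

lemma hutch_isCompact {f : Fin (p+1) → ES D → ES D} (hfc : ∀ i, Continuous (f i)) {K : Set (ES D)}
    (hK : IsCompact K) : IsCompact (hutch f K) :=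
  isCompact_iUnion fun i => hK.image (hfc i)

lemma hutch_nonempty {f : Fin (p+1) → ES D → ES D} {K : Set (ES D)} (hne : K.Nonempty) :
    (hutch f K).Nonempty := by
  obtain ⟨x, hx⟩ := hne
  exact ⟨f 0 x, mem_hutch 0 hx⟩

lemma rad_smul {K : Set (ES D)} (hK : IsCompact K) (hne : K.Nonempty) {c : ℝ} (hc : 0 ≤ c) :
    rad (c • K) = c * rad K := by
  have himg : norm '' (c • K) = (fun t => c * t) '' (norm '' K) := by
    rw [Set.image_image]
    ext t
    constructor
    · rintro ⟨y, ⟨x, hx, rfl⟩, rfl⟩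
      exact ⟨x, hx, by simp [norm_smul, abs_of_nonneg hc]⟩
    · rintro ⟨x, hx, rfl⟩
      exact ⟨c • x, Set.smul_mem_smul_set hx, by simp [norm_smul, abs_of_nonneg hc]⟩
  have hmono : Monotone (fun t : ℝ => c * t) := fun s t hst =>
    mul_le_mul_of_nonneg_left hst hc
  have := hmono.map_csSup_of_continuousAt (by fun_prop) (hne.image _)
    (hK.image continuous_norm).bddAbove
  rw [rad, himg, ← this]; rfl

/-- The renormalized orbit. -/
def Kn (f : Fin (p+1) → ES D → ES D) (K₀ : Set (ES D)) (n : ℕ) : Set (ES D) :=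
  (hutchRho f)^[n] K₀

/-- The normalizing sequence. -/
def dn (f : Fin (p+1) → ES D → ES D) (K₀ : Set (ES D)) (n : ℕ) : ℝ :=
  rad (hutch f (Kn f K₀ n))

section Orbit

variable {f : Fin (p+1) → ES D → ES D} {K₀ : Set (ES D)}
variable (hfc : ∀ i, Continuous (f i)) (hK₀c : IsCompact K₀) (hK₀ne : K₀.Nonempty)
variable (hpos : ∀ n, 0 < dn f K₀ n)

lemma Kn_succ (n : ℕ) : Kn f K₀ (n+1) = (dn f K₀ n)⁻¹ • hutch f (Kn f K₀ n) := by
  rw [Kn, Function.iterate_succ_apply']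
  rfl

include hfc hK₀c hK₀ne in
lemma Kn_compact_nonempty (n : ℕ) : IsCompact (Kn f K₀ n) ∧ (Kn f K₀ n).Nonempty := by
  induction n with
  | zero => exact ⟨hK₀c, hK₀ne⟩
  | succ n ih =>
    rw [Kn_succ]
    exact ⟨(hutch_isCompact hfc ih.1).smul _, (hutch_nonempty ih.2).smul_set⟩

include hfc hK₀c hK₀ne hpos in
lemma rad_Kn {n : ℕ} (hn : 1 ≤ n) : rad (Kn f K₀ n) = 1 := by
  obtain ⟨m, rfl⟩ := Nat.exists_eq_add_of_le hn
  rw [add_comm, Kn_succ]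
  obtain ⟨hc, hne⟩ := Kn_compact_nonempty hfc hK₀c hK₀ne m
  rw [rad_smul (hutch_isCompact hfc hc) (hutch_nonempty hne) (inv_nonneg.2 (hpos m).le)]
  exact inv_mul_cancel₀ (hpos m).ne'

include hfc hK₀c hK₀ne in
lemma norm_f_le {n : ℕ} {x : ES D} (hx : x ∈ Kn f K₀ n) (i : Fin (p+1)) :
    ‖f i x‖ ≤ dn f K₀ n :=
  norm_le_rad (hutch_isCompact hfc (Kn_compact_nonempty hfc hK₀c hK₀ne n).1) (mem_hutch i hx)

lemma mem_next {n : ℕ} {x : ES D} (hx : x ∈ Kn f K₀ n) (i : Fin (p+1)) :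
    (dn f K₀ n)⁻¹ • f i x ∈ Kn f K₀ (n+1) := by
  rw [Kn_succ]
  exact Set.smul_mem_smul_set (mem_hutch i hx)

include hfc hK₀c hK₀ne in
lemma exists_attain (n : ℕ) :
    ∃ i : Fin (p+1), ∃ x ∈ Kn f K₀ n, ‖f i x‖ = dn f K₀ n := by
  obtain ⟨hc, hne⟩ := Kn_compact_nonempty hfc hK₀c hK₀ne n
  obtain ⟨w, hw, hwe⟩ := exists_norm_eq_rad (hutch_isCompact hfc hc) (hutch_nonempty hne)
  obtain ⟨i, x, hx, rfl⟩ := by simpa [hutch] using hw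
  exact ⟨i, x, hx, hwe⟩

include hfc hK₀c hK₀ne hpos in
lemma norm_le_one {n : ℕ} (hn : 1 ≤ n) {x : ES D} (hx : x ∈ Kn f K₀ n) : ‖x‖ ≤ 1 := by
  have h := norm_le_rad (Kn_compact_nonempty hfc hK₀c hK₀ne n).1 hx
  rwa [rad_Kn hfc hK₀c hK₀ne hpos hn] at h

include hfc hK₀c hK₀ne hpos in
lemma exists_norm_one {n : ℕ} (hn : 1 ≤ n) : ∃ x ∈ Kn f K₀ n, ‖x‖ = 1 := by
  obtain ⟨hc, hne⟩ := Kn_compact_nonempty hfc hK₀c hK₀ne n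
  obtain ⟨x, hx, hxe⟩ := exists_norm_eq_rad hc hne
  exact ⟨x, hx, by rwa [rad_Kn hfc hK₀c hK₀ne hpos hn] at hxe⟩

end Orbit

lemma core {x z bv : ES D} {a d : ℝ} (ha : 0 ≤ a) (had : a ≤ d) (hd : 0 < d)
    (hx : ‖x‖ ≤ 1) (hz : z = a • x + bv) (hzd : ‖z‖ = d) :
    d ≤ ‖(d⁻¹ * a) • z + bv‖ := by
  have hq0 : (0:ℝ) ≤ ‖x‖ := norm_nonneg _
  have hnb0 : (0:ℝ) ≤ ‖bv‖ := norm_nonneg _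
  have hs : (inner ℝ x bv : ℝ) ≤ ‖bv‖ := le_trans (real_inner_le_norm x bv)
    (by simpa using mul_le_of_le_one_left hnb0 hx)
  have hd2 : d ^ 2 = a ^ 2 * ‖x‖ ^ 2 + 2 * (a * inner ℝ x bv) + ‖bv‖ ^ 2 := by
    rw [← hzd, hz, norm_add_sq_real, norm_smul, real_inner_smul_left, Real.norm_eq_abs,
      abs_of_nonneg ha]
    ring
  have hsum : d ≤ a + ‖bv‖ := by
    have h1 : ‖z‖ ≤ ‖a • x‖ + ‖bv‖ := by rw [hz]; exact norm_add_le _ _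
    have h2 : ‖a • x‖ = a * ‖x‖ := by rw [norm_smul, Real.norm_eq_abs, abs_of_nonneg ha]
    nlinarith [mul_le_of_le_one_right ha hx]
  have hzb : (inner ℝ z bv : ℝ) = a * inner ℝ x bv + ‖bv‖ ^ 2 := by
    rw [hz, inner_add_left, real_inner_smul_left, real_inner_self_eq_norm_mul_norm]
    ring
  have hw2 : ‖(d⁻¹ * a) • z + bv‖ ^ 2
      = (d⁻¹ * a) ^ 2 * d ^ 2 + 2 * ((d⁻¹ * a) * (a * inner ℝ x bv + ‖bv‖ ^ 2)) + ‖bv‖ ^ 2 := by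
    rw [norm_add_sq_real, norm_smul, real_inner_smul_left, hzb, hzd, Real.norm_eq_abs,
      abs_of_nonneg (by positivity : (0:ℝ) ≤ d⁻¹ * a)]
    ring
  have hkey : d ^ 2 ≤ ‖(d⁻¹ * a) • z + bv‖ ^ 2 := by
    have hexp : ((d⁻¹ * a) ^ 2 * d ^ 2 + 2 * ((d⁻¹ * a) * (a * inner ℝ x bv + ‖bv‖ ^ 2))
        + ‖bv‖ ^ 2) * d = a ^ 2 * d + 2 * (a * (a * inner ℝ x bv + ‖bv‖ ^ 2)) + ‖bv‖ ^ 2 * d := by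
      field_simp
    have hgoal : d ^ 2 * d ≤ ((d⁻¹ * a) ^ 2 * d ^ 2
        + 2 * ((d⁻¹ * a) * (a * inner ℝ x bv + ‖bv‖ ^ 2)) + ‖bv‖ ^ 2) * d := by
      rw [hexp, hd2]
      nlinarith [mul_nonneg (mul_nonneg ha (sub_nonneg.2 had)) (sub_nonneg.2 hs),
        mul_nonneg (mul_nonneg ha hnb0) (by linarith : (0:ℝ) ≤ a + ‖bv‖ - d),
        mul_nonneg (mul_nonneg (mul_nonneg ha ha) hd.le)
          (mul_nonneg (by linarith : (0:ℝ) ≤ 1 - ‖x‖) (by linarith : (0:ℝ) ≤ 1 + ‖x‖))]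
    rw [hw2]
    exact le_of_mul_le_mul_right hgoal hd
  calc d = ‖z‖ := hzd.symm
    _ ≤ _ := by
        rw [← hzd] at hkey ⊢
        exact le_of_pow_le_pow_left₀ two_ne_zero (norm_nonneg _) hkey

lemma val_linear {f : Fin (p+1) → ES D → ES D} {α : Fin (p+1) → ℝ} {b : Fin (p+1) → ES D}
    (hf : ∀ i x, f i x = α i • x + b i) (i : Fin (p+1)) (hb : b i ≠ 0) (x : ES D) :
    (inner ℝ (f i x) (‖b i‖⁻¹ • b i) : ℝ) = α i * inner ℝ x (‖b i‖⁻¹ • b i) + ‖b i‖ := by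
  have hnb : (0:ℝ) < ‖b i‖ := norm_pos_iff.2 hb
  have hbb : (inner ℝ (b i) (‖b i‖⁻¹ • b i) : ℝ) = ‖b i‖ := by
    rw [real_inner_smul_right, real_inner_self_eq_norm_mul_norm]
    field_simp
  rw [hf, inner_add_left, real_inner_smul_left, hbb]

lemma norm_u {v : ES D} (hv : v ≠ 0) : ‖‖v‖⁻¹ • v‖ = 1 := by
  have hnb : (0:ℝ) < ‖v‖ := norm_pos_iff.2 hv
  rw [norm_smul, Real.norm_eq_abs, abs_of_nonneg (inv_nonneg.2 hnb.le)]
  field_simp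

section Mono

variable {f : Fin (p+1) → ES D → ES D} {K₀ : Set (ES D)}
variable {α : Fin (p+1) → ℝ} {b : Fin (p+1) → ES D}
variable (hfc : ∀ i, Continuous (f i)) (hK₀c : IsCompact K₀) (hK₀ne : K₀.Nonempty)
variable (hpos : ∀ n, 0 < dn f K₀ n)
variable (hα : ∀ i, 0 ≤ α i) (hf : ∀ i x, f i x = α i • x + b i)

include hfc hK₀c hK₀ne hpos hα hf in
lemma dn_mono {n : ℕ} (hn : 1 ≤ n) (hA : ∀ i, α i ≤ dn f K₀ n) :
    dn f K₀ n ≤ dn f K₀ (n+1) := by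
  obtain ⟨k, x, hx, hke⟩ := exists_attain hfc hK₀c hK₀ne n
  have hy : (dn f K₀ n)⁻¹ • f k x ∈ Kn f K₀ (n+1) := mem_next hx k
  have hfy : f k ((dn f K₀ n)⁻¹ • f k x) = ((dn f K₀ n)⁻¹ * α k) • (f k x) + b k := by
    rw [hf, hf, smul_smul, mul_comm]
  have hcore : dn f K₀ n ≤ ‖((dn f K₀ n)⁻¹ * α k) • (f k x) + b k‖ :=
    core (hα k) (hA k) (hpos n) (norm_le_one hfc hK₀c hK₀ne hpos hn hx) (hf k x) hke
  calc dn f K₀ n ≤ ‖f k ((dn f K₀ n)⁻¹ • f k x)‖ := by rw [hfy]; exact hcore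
    _ ≤ dn f K₀ (n+1) := norm_f_le hfc hK₀c hK₀ne hy k

include hfc hK₀c hK₀ne hpos hα hf in
lemma val_rec {n : ℕ} {x : ES D} (hx : x ∈ Kn f K₀ n) (i : Fin (p+1)) (hb : b i ≠ 0) :
    ∃ y ∈ Kn f K₀ (n+1),
      (inner ℝ (f i y) (‖b i‖⁻¹ • b i) : ℝ)
        = α i * (dn f K₀ n)⁻¹ * inner ℝ (f i x) (‖b i‖⁻¹ • b i) + ‖b i‖ := by
  refine ⟨(dn f K₀ n)⁻¹ • f i x, mem_next hx i, ?_⟩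
  rw [val_linear hf i hb, real_inner_smul_left]
  ring

include hfc hK₀c hK₀ne in
lemma val_le {n : ℕ} {x : ES D} (hx : x ∈ Kn f K₀ n) (i : Fin (p+1)) (hb : b i ≠ 0) :
    (inner ℝ (f i x) (‖b i‖⁻¹ • b i) : ℝ) ≤ dn f K₀ n := by
  calc (inner ℝ (f i x) (‖b i‖⁻¹ • b i) : ℝ) ≤ ‖f i x‖ * ‖‖b i‖⁻¹ • b i‖ := real_inner_le_norm _ _
    _ = ‖f i x‖ := by rw [norm_u hb, mul_one]
    _ ≤ dn f K₀ n := norm_f_le hfc hK₀c hK₀ne hx i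

include hα hf in
lemma val_lb {x : ES D} (hxn : ‖x‖ ≤ 1) (i : Fin (p+1)) (hb : b i ≠ 0) :
    ‖b i‖ - α i ≤ (inner ℝ (f i x) (‖b i‖⁻¹ • b i) : ℝ) := by
  rw [val_linear hf i hb]
  have h1 : |(inner ℝ x (‖b i‖⁻¹ • b i) : ℝ)| ≤ 1 := by
    calc |(inner ℝ x (‖b i‖⁻¹ • b i) : ℝ)| ≤ ‖x‖ * ‖‖b i‖⁻¹ • b i‖ := abs_real_inner_le_norm _ _
      _ = ‖x‖ := by rw [norm_u hb, mul_one]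
      _ ≤ 1 := hxn
  have h2 := abs_le.1 h1
  nlinarith [hα i, h2.1]

include hfc hK₀c hK₀ne hpos hα hf in
lemma dn_le_of_bound {C : ℝ} (hub : ∀ i, α i + ‖b i‖ ≤ C) {n : ℕ} (hn : 1 ≤ n) :
    dn f K₀ n ≤ C := by
  obtain ⟨k, x, hx, hke⟩ := exists_attain hfc hK₀c hK₀ne n
  rw [← hke, hf]
  calc ‖α k • x + b k‖ ≤ ‖α k • x‖ + ‖b k‖ := norm_add_le _ _
    _ = α k * ‖x‖ + ‖b k‖ := by rw [norm_smul, Real.norm_eq_abs, abs_of_nonneg (hα k)]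
    _ ≤ α k + ‖b k‖ := by
        have h1 := norm_le_one hfc hK₀c hK₀ne hpos hn hx
        nlinarith [hα k]
    _ ≤ C := hub k

include hfc hK₀c hK₀ne in
lemma Kn_nonempty (n : ℕ) : (Kn f K₀ n).Nonempty :=
  (Kn_compact_nonempty hfc hK₀c hK₀ne n).2

end Mono

section CaseB

variable {f : Fin (p+1) → ES D → ES D} {K₀ : Set (ES D)}
variable {α : Fin (p+1) → ℝ} {b : Fin (p+1) → ES D}
variable (hfc : ∀ i, Continuous (f i)) (hK₀c : IsCompact K₀) (hK₀ne : K₀.Nonempty)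
variable (hpos : ∀ n, 0 < dn f K₀ n)
variable (hα : ∀ i, 0 ≤ α i) (hf : ∀ i x, f i x = α i • x + b i)

include hfc hK₀c hK₀ne hpos hα hf in
lemma caseB (j : Fin (p+1)) (hlt : ∀ n, 1 ≤ n → dn f K₀ n < α j) :
    ∀ n, 1 ≤ n → dn f K₀ n = α j - ‖b j‖ := by
  set A := α j with hA_def
  have hA : 0 < A := lt_trans (hpos 1) (hlt 1 le_rfl)
  -- b j ≠ 0
  have hbj : b j ≠ 0 := by
    intro hb0
    obtain ⟨x, hx, hx1⟩ := exists_norm_one hfc hK₀c hK₀ne hpos (n := 1) le_rfl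
    have h1 : ‖f j x‖ = A := by
      rw [hf, hb0, add_zero, norm_smul, Real.norm_eq_abs, abs_of_nonneg (hα j), hx1, mul_one]
    have h2 := norm_f_le hfc hK₀c hK₀ne hx j
    rw [h1] at h2
    exact absurd h2 (not_le.2 (hlt 1 le_rfl))
  set B := ‖b j‖ with hB_def
  have hB : 0 < B := norm_pos_iff.2 hbj
  obtain ⟨u, hu_def⟩ : ∃ u : ES D, u = B⁻¹ • b j := ⟨_, rfl⟩
  have hu1 : ‖u‖ = 1 := by rw [hu_def]; exact norm_u hbj
  have hBu : B • u = b j := by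
    rw [hu_def, smul_smul, mul_inv_cancel₀ hB.ne', one_smul]
  have huu : (inner ℝ u u : ℝ) = 1 := by
    rw [real_inner_self_eq_norm_mul_norm, hu1, mul_one]
  -- the product sequence
  set P : ℕ → ℕ → ℝ := fun m k => ∏ l ∈ Finset.range (k+1), (dn f K₀ (m+l) / A) with hP_def
  have hPpos : ∀ m k, 1 ≤ m → 0 < P m k :=
    fun m k hm => Finset.prod_pos fun l _ => div_pos (hpos (m+l)) hA
  have hPle1 : ∀ m k, 1 ≤ m → P m k ≤ 1 := by
    intro m k hm
    apply Finset.prod_le_one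
    · exact fun l _ => (div_pos (hpos (m+l)) hA).le
    · intro l _
      exact (div_le_one hA).2 (hlt (m+l) (le_trans hm (Nat.le_add_right m l))).le
  have hPsucc : ∀ m k, P m (k+1) = (dn f K₀ m / A) * P (m+1) k := by
    intro m k
    rw [hP_def]
    simp only
    rw [Finset.prod_range_succ' (fun l => dn f K₀ (m+l) / A) (k+1)]
    have : ∀ l, dn f K₀ (m+(l+1)) / A = dn f K₀ ((m+1)+l) / A := by
      intro l; congr 2; omega
    rw [Finset.prod_congr rfl (fun l _ => this l), mul_comm]
    simp
  -- the containment claim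
  have hQ : ∀ k m, 1 ≤ m → ∃ c : ℝ, 0 ≤ c ∧ (B/A) * (k+1) * P m k ≤ c ∧
      ∀ x ∈ Kn f K₀ m, ‖x + c • u‖ ≤ P m k := by
    intro k
    induction k with
    | zero =>
      intro m hm
      refine ⟨B/A, by positivity, ?_, ?_⟩
      · have h1 : P m 0 ≤ 1 := hPle1 m 0 hm
        have h2 : (0:ℝ) ≤ B/A := by positivity
        nlinarith
      · intro x hx
        have hid : A • (x + (B/A) • u) = f j x := by
          rw [hf, smul_add, smul_smul, mul_div_cancel₀ B hA.ne', hBu]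
        have hnorm : A * ‖x + (B/A) • u‖ = ‖f j x‖ := by
          rw [← hid, norm_smul, Real.norm_eq_abs, abs_of_nonneg hA.le]
        have h3 : ‖f j x‖ ≤ dn f K₀ m := norm_f_le hfc hK₀c hK₀ne hx j
        have hP0 : P m 0 = dn f K₀ m / A := by
          rw [hP_def]; simp
        rw [hP0, le_div_iff₀ hA, mul_comm]
        rw [hnorm]
        exact h3
    | succ k ih =>
      intro m hm
      obtain ⟨c', hc'0, hc'l, hc'b⟩ := ih (m+1) (by omega)
      refine ⟨(B + dn f K₀ m * c')/A, div_nonneg (by nlinarith [(hpos m).le]) hA.le, ?_, ?_⟩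
      · have h1 : (B/A) * (k+1+1) * P m (k+1)
            = B/A * P m (k+1) + (B/A) * (k+1) * P m (k+1) := by push_cast; ring
        have h2 : P m (k+1) ≤ 1 := hPle1 m (k+1) hm
        have h3 : (B/A) * (k+1) * P m (k+1)
            = (dn f K₀ m / A) * ((B/A) * (k+1) * P (m+1) k) := by
          rw [hPsucc m k]; ring
        have h4 : (dn f K₀ m / A) * ((B/A) * (k+1) * P (m+1) k)
            ≤ (dn f K₀ m / A) * c' :=
          mul_le_mul_of_nonneg_left hc'l (div_nonneg (hpos m).le hA.le)
        have h5 : (B/A) * P m (k+1) ≤ B/A := by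
          have : (0:ℝ) ≤ B/A := by positivity
          nlinarith
        have hgoal : (B + dn f K₀ m * c')/A = B/A + (dn f K₀ m / A) * c' := by ring
        rw [hgoal]
        push_cast
        rw [h1]
        have h6 := le_trans (le_of_eq h3) h4
        linarith
      · intro x hx
        have hy := hc'b _ (mem_next hx j)
        set y : ES D := (dn f K₀ m)⁻¹ • f j x with hy_def
        have hid : A • (x + ((B + dn f K₀ m * c')/A) • u) = dn f K₀ m • (y + c' • u) := by
          rw [hy_def, smul_add, smul_add, smul_inv_smul₀ (hpos m).ne', hf, ← hBu, smul_smul,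
            mul_div_cancel₀ _ hA.ne', smul_smul, add_smul]
          abel
        have hnorm : A * ‖x + ((B + dn f K₀ m * c')/A) • u‖
            = dn f K₀ m * ‖y + c' • u‖ := by
          have := congrArg norm hid
          rwa [norm_smul, norm_smul, Real.norm_eq_abs, Real.norm_eq_abs,
            abs_of_nonneg hA.le, abs_of_nonneg (hpos m).le] at this
        rw [hPsucc m k]
        rw [← mul_le_mul_iff_right₀ hA, hnorm]
        calc dn f K₀ m * ‖y + c' • u‖ ≤ dn f K₀ m * P (m+1) k :=
              mul_le_mul_of_nonneg_left hy (hpos m).le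
          _ = A * (dn f K₀ m / A * P (m+1) k) := by field_simp
  -- P is small
  have hPsmall : ∀ m, 1 ≤ m → ∀ k, P m k ≤ 2*A/(B*(k+1)) := by
    intro m hm k
    obtain ⟨c, hc0, hcl, hcb⟩ := hQ k m hm
    obtain ⟨xb, hxb, hxb1⟩ := exists_norm_one hfc hK₀c hK₀ne hpos hm
    have h1 : c ≤ P m k + 1 := by
      have h2 : ‖c • u‖ ≤ ‖xb + c • u‖ + ‖xb‖ := by
        have := norm_sub_le (xb + c • u) xb
        simpa using this
      rw [norm_smul, Real.norm_eq_abs, abs_of_nonneg hc0, hu1, mul_one] at h2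
      rw [hxb1] at h2
      exact le_trans h2 (by linarith [hcb xb hxb])
    have h3 : (B/A) * (k+1) * P m k ≤ 2 := by
      have := hPle1 m k hm
      linarith
    rw [div_mul_eq_mul_div, div_mul_eq_mul_div, div_le_iff₀ (by positivity)] at h3
    rw [le_div_iff₀ (by positivity : (0:ℝ) < B*(k+1))]
    nlinarith
  have harch : ∀ δ : ℝ, 0 < δ → ∀ m, 1 ≤ m → ∃ k : ℕ, P m k < δ := by
    intro δ hδ m hm
    obtain ⟨k, hk⟩ := exists_nat_gt (2*A/(B*δ))
    refine ⟨k, lt_of_le_of_lt (hPsmall m hm k) ?_⟩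
    rw [div_lt_iff₀ (by positivity)]
    rw [div_lt_iff₀ (by positivity)] at hk
    have hk1 : (k:ℝ) < k + 1 := by linarith
    nlinarith
  -- structure of each point
  have hptu : ∀ m, 1 ≤ m → ∀ x ∈ Kn f K₀ m,
      x = -((-(inner ℝ x u : ℝ)) • u) ∧ 0 ≤ -(inner ℝ x u : ℝ) ∧ ‖x‖ = -(inner ℝ x u : ℝ) := by
    intro m hm x hx
    set t : ℝ := -(inner ℝ x u : ℝ) with ht_def
    have hxt : ∀ k : ℕ, ‖x + t • u‖ ≤ 2 * P m k := by
      intro k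
      obtain ⟨c, hc0, hcl, hcb⟩ := hQ k m hm
      have h1 : ‖x + c • u‖ ≤ P m k := hcb x hx
      have h2 : |c - t| ≤ P m k := by
        have hinner : (inner ℝ (x + c • u) u : ℝ) = c - t := by
          rw [inner_add_left, real_inner_smul_left, huu, ht_def]
          ring
        calc |c - t| = |(inner ℝ (x + c • u) u : ℝ)| := by rw [hinner]
          _ ≤ ‖x + c • u‖ * ‖u‖ := abs_real_inner_le_norm _ _
          _ = ‖x + c • u‖ := by rw [hu1, mul_one]
          _ ≤ P m k := h1
      calc ‖x + t • u‖ = ‖(x + c • u) + (t - c) • u‖ := by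
            congr 1
            rw [sub_smul]
            abel
        _ ≤ ‖x + c • u‖ + ‖(t - c) • u‖ := norm_add_le _ _
        _ ≤ P m k + |t - c| := by
            rw [norm_smul, Real.norm_eq_abs, hu1, mul_one]
            linarith
        _ ≤ 2 * P m k := by
            rw [abs_sub_comm] at h2
            linarith
    have hxtu : x + t • u = 0 := by
      by_contra hne
      have hpos' : 0 < ‖x + t • u‖ := norm_pos_iff.2 hne
      obtain ⟨k, hk⟩ := harch (‖x + t • u‖/2) (by positivity) m hm
      have := hxt k
      linarith
    have hxeq : x = -(t • u) := eq_neg_of_add_eq_zero_left hxtu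
    -- t ≥ 0
    have ht0 : 0 ≤ t := by
      by_contra hneg
      push_neg at hneg
      obtain ⟨k, hk⟩ := harch (-t) (by linarith) m hm
      obtain ⟨c, hc0, hcl, hcb⟩ := hQ k m hm
      have h1 : ‖x + c • u‖ ≤ P m k := hcb x hx
      have h2 : |c - t| ≤ P m k := by
        have hinner : (inner ℝ (x + c • u) u : ℝ) = c - t := by
          rw [inner_add_left, real_inner_smul_left, huu, ht_def]
          ring
        calc |c - t| = |(inner ℝ (x + c • u) u : ℝ)| := by rw [hinner]
          _ ≤ ‖x + c • u‖ * ‖u‖ := abs_real_inner_le_norm _ _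
          _ = ‖x + c • u‖ := by rw [hu1, mul_one]
          _ ≤ P m k := h1
      have h3 := abs_le.1 h2
      linarith [h3.2]
    -- ‖x‖ = |t|
    have hxnt : ‖x‖ = t := by
      rw [hxeq, norm_neg, norm_smul, Real.norm_eq_abs, abs_of_nonneg ht0, hu1, mul_one]
    exact ⟨hxeq, ht0, hxnt⟩
  -- all points in Kn m (m ≥ 1) are equal
  have hsing : ∀ m, 1 ≤ m → ∀ x ∈ Kn f K₀ m, ∀ x' ∈ Kn f K₀ m, x = x' := by
    intro m hm x hx x' hx'
    by_contra hne
    have hd : 0 < ‖x - x'‖ := norm_pos_iff.2 (sub_ne_zero.2 hne)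
    obtain ⟨k, hk⟩ := harch (‖x - x'‖/2) (by positivity) m hm
    obtain ⟨c, hc0, hcl, hcb⟩ := hQ k m hm
    have h1 : ‖x - x'‖ ≤ 2 * P m k := by
      calc ‖x - x'‖ = ‖(x + c • u) - (x' + c • u)‖ := by abel_nf
        _ ≤ ‖x + c • u‖ + ‖x' + c • u‖ := norm_sub_le _ _
        _ ≤ 2 * P m k := by linarith [hcb x hx, hcb x' hx']
    linarith
  -- the unique point is -u
  have hneg_u : ∀ m, 1 ≤ m → ∀ x ∈ Kn f K₀ m, x = -u := by
    intro m hm x hx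
    obtain ⟨xb, hxb, hxb1⟩ := exists_norm_one hfc hK₀c hK₀ne hpos hm
    obtain ⟨hxeq, ht0, hxnt⟩ := hptu m hm xb hxb
    have ht1 : -(inner ℝ xb u : ℝ) = 1 := by rw [← hxnt, hxb1]
    have hxbu : xb = -u := by
      rw [hxeq, ht1, one_smul]
    rw [hsing m hm x hx xb hxb, hxbu]
  -- conclude the value of dn
  intro n hn
  obtain ⟨x, hx⟩ := Kn_nonempty hfc hK₀c hK₀ne n
  have hxu : x = -u := hneg_u n hn x hx
  rw [hxu] at hx
  have hy := mem_next hx j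
  have hyu : (dn f K₀ n)⁻¹ • f j (-u) = -u := hneg_u (n+1) (by omega) _ hy
  have hfju : f j (-u) = (B - A) • u := by
    rw [hf, ← hBu, smul_neg, sub_smul]
    abel
  rw [hfju, smul_smul] at hyu
  have hinner := congrArg (fun w : ES D => (inner ℝ w u : ℝ)) hyu
  simp only [real_inner_smul_left, inner_neg_left, huu, mul_one] at hinner
  have hdn := hpos n
  field_simp at hinner
  -- hinner : (dn f K₀ n)⁻¹ * (B - A) = -1  (in some form)
  have : B - A = -dn f K₀ n := by
    nlinarith [hinner]
  linarith

end CaseB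

section CaseA
variable {f : Fin (p+1) → ES D → ES D} {K₀ : Set (ES D)}
variable {α : Fin (p+1) → ℝ} {b : Fin (p+1) → ES D}
variable (hfc : ∀ i, Continuous (f i)) (hK₀c : IsCompact K₀) (hK₀ne : K₀.Nonempty)
variable (hpos : ∀ n, 0 < dn f K₀ n)
variable (hα : ∀ i, 0 ≤ α i) (hf : ∀ i x, f i x = α i • x + b i)

include hfc hK₀c hK₀ne hpos hα hf in
/-- If the normalizing sequence is eventually constant equal to `α j`, then `b j = 0`. -/
lemma caseA_eq (j : Fin (p+1)) (N : ℕ) (hN : 1 ≤ N)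
    (heq : ∀ n, N ≤ n → dn f K₀ n = α j) : b j = 0 := by
  by_contra hbj
  have hA : 0 < α j := by
    have := hpos N
    rwa [heq N le_rfl] at this
  have hB : 0 < ‖b j‖ := norm_pos_iff.2 hbj
  have hinv : ∀ k : ℕ, ∃ x ∈ Kn f K₀ (N + k),
      (‖b j‖ - α j) + k * ‖b j‖ ≤ (inner ℝ (f j x) (‖b j‖⁻¹ • b j) : ℝ) := by
    intro k
    induction k with
    | zero =>
      obtain ⟨x, hx⟩ := Kn_nonempty hfc hK₀c hK₀ne N
      refine ⟨x, hx, ?_⟩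
      have h := val_lb hα hf (norm_le_one hfc hK₀c hK₀ne hpos hN hx) j hbj
      push_cast
      linarith
    | succ k ih =>
      obtain ⟨x, hx, hval⟩ := ih
      obtain ⟨y, hy, hvy⟩ := val_rec hfc hK₀c hK₀ne hpos hα hf hx j hbj
      refine ⟨y, hy, ?_⟩
      rw [hvy, heq (N+k) (by omega)]
      rw [mul_inv_cancel₀ hA.ne', one_mul]
      push_cast
      linarith
  obtain ⟨k, hk⟩ := exists_nat_gt ((2 * α j) / ‖b j‖)
  obtain ⟨x, hx, hval⟩ := hinv k
  have hub : (inner ℝ (f j x) (‖b j‖⁻¹ • b j) : ℝ) ≤ α j := by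
    have := val_le hfc hK₀c hK₀ne hx j hbj
    rwa [heq (N+k) (by omega)] at this
  rw [div_lt_iff₀ hB] at hk
  linarith

include hfc hK₀c hK₀ne hpos hα hf in
/-- If the limit `dd` exceeds `α j`, then `dd` is at least `M = max (α i + ‖b i‖)`. -/
lemma caseA_gt (j : Fin (p+1)) (hjm : ∀ i, α i ≤ α j) (i₀ : Fin (p+1)) (dd : ℝ)
    (hi₀ : ∀ i, α i + ‖b i‖ ≤ α i₀ + ‖b i₀‖)
    (N₁ : ℕ) (hN₁ : 1 ≤ N₁) (hD : α j < dn f K₀ N₁)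
    (hlow : ∀ n, N₁ ≤ n → dn f K₀ N₁ ≤ dn f K₀ n)
    (hup : ∀ n, N₁ ≤ n → dn f K₀ n ≤ dd)
    (hdd : α j < dd) :
    α i₀ + ‖b i₀‖ ≤ dd := by
  have hdd0 : 0 < dd := lt_of_le_of_lt (hα j) hdd
  have hb0 : b i₀ ≠ 0 := by
    intro h0
    have hub : ∀ i, α i + ‖b i‖ ≤ α j := by
      intro i
      have h1 := hi₀ i
      rw [h0] at h1
      simp at h1
      exact le_trans h1 (hjm i₀)
    have := dn_le_of_bound hfc hK₀c hK₀ne hpos hα hf hub hN₁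
    linarith
  have hB : 0 < ‖b i₀‖ := norm_pos_iff.2 hb0
  have hβ0 : 0 ≤ α i₀ := hα i₀
  have hD₁ : 0 < dn f K₀ N₁ := hpos N₁
  have hβD : α i₀ < dn f K₀ N₁ := lt_of_le_of_lt (hjm i₀) hD
  -- Step 1 : find a point with nonnegative value
  have hstep1 : ∃ n, N₁ ≤ n ∧ ∃ x ∈ Kn f K₀ n,
      0 ≤ (inner ℝ (f i₀ x) (‖b i₀‖⁻¹ • b i₀) : ℝ) := by
    by_contra hneg
    push_neg at hneg
    obtain ⟨ρ, hρ_def⟩ : ∃ ρ : ℝ, ρ = α i₀ / dn f K₀ N₁ := ⟨_, rfl⟩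
    have hρ0 : 0 ≤ ρ := hρ_def ▸ div_nonneg hβ0 hD₁.le
    have hρ1 : ρ < 1 := hρ_def ▸ (div_lt_one hD₁).2 hβD
    obtain ⟨fp, hfp_def⟩ : ∃ fp : ℝ, fp = ‖b i₀‖ / (1 - ρ) := ⟨_, rfl⟩
    have hfp : 0 < fp := hfp_def ▸ div_pos hB (by linarith)
    have h1ρ : (1:ℝ) - ρ ≠ 0 := ne_of_gt (by linarith)
    have hfpid : ρ * fp + ‖b i₀‖ = fp := by
      rw [hfp_def]
      field_simp [h1ρ]
      ring
    obtain ⟨Δ, hΔ_def⟩ : ∃ Δ : ℝ, Δ = (‖b i₀‖ - α i₀) - fp := ⟨_, rfl⟩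
    have hinv : ∀ k : ℕ, ∃ x ∈ Kn f K₀ (N₁ + k),
        fp + ρ ^ k * Δ ≤ (inner ℝ (f i₀ x) (‖b i₀‖⁻¹ • b i₀) : ℝ) := by
      intro k
      induction k with
      | zero =>
        obtain ⟨x, hx⟩ := Kn_nonempty hfc hK₀c hK₀ne N₁
        refine ⟨x, hx, ?_⟩
        have h := val_lb hα hf (norm_le_one hfc hK₀c hK₀ne hpos hN₁ hx) i₀ hb0
        rw [pow_zero, one_mul, hΔ_def]
        linarith
      | succ k ih =>
        obtain ⟨x, hx, hval⟩ := ih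
        have hvneg : (inner ℝ (f i₀ x) (‖b i₀‖⁻¹ • b i₀) : ℝ) < 0 :=
          hneg (N₁ + k) (by omega) x hx
        obtain ⟨y, hy, hvy⟩ := val_rec hfc hK₀c hK₀ne hpos hα hf hx i₀ hb0
        refine ⟨y, hy, ?_⟩
        rw [hvy]
        have hdn := hpos (N₁ + k)
        have hratio : α i₀ * (dn f K₀ (N₁ + k))⁻¹ ≤ ρ := by
          rw [hρ_def, div_eq_mul_inv]
          exact mul_le_mul_of_nonneg_left
            (inv_anti₀ hD₁ (hlow (N₁+k) (by omega))) hβ0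
        have h2 : ρ * (inner ℝ (f i₀ x) (‖b i₀‖⁻¹ • b i₀) : ℝ)
            ≤ α i₀ * (dn f K₀ (N₁ + k))⁻¹ * (inner ℝ (f i₀ x) (‖b i₀‖⁻¹ • b i₀) : ℝ) :=
          mul_le_mul_of_nonpos_right hratio hvneg.le
        have h3 : ρ * (fp + ρ ^ k * Δ) ≤ ρ * (inner ℝ (f i₀ x) (‖b i₀‖⁻¹ • b i₀) : ℝ) :=
          mul_le_mul_of_nonneg_left hval hρ0
        have h4 : fp + ρ ^ (k+1) * Δ = ρ * (fp + ρ ^ k * Δ) + ‖b i₀‖ := by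
          rw [mul_add, ← mul_assoc, ← pow_succ']
          linarith
        linarith
    rcases le_or_gt 0 Δ with hΔ0 | hΔ0
    · obtain ⟨x, hx, hval⟩ := hinv 0
      have hcon := hneg (N₁ + 0) (by omega) x hx
      have h5 : (0:ℝ) ≤ ρ ^ 0 * Δ := by rw [pow_zero, one_mul]; exact hΔ0
      linarith
    · obtain ⟨k, hk⟩ := exists_pow_lt_of_lt_one (div_pos hfp (by linarith : (0:ℝ) < -Δ)) hρ1
      obtain ⟨x, hx, hval⟩ := hinv k
      have hcon := hneg (N₁ + k) (by omega) x hx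
      have h6 : ρ ^ k * (-Δ) < fp := by
        have h7 : (0:ℝ) < -Δ := by linarith
        calc ρ ^ k * (-Δ) < fp / (-Δ) * (-Δ) := mul_lt_mul_of_pos_right hk h7
          _ = fp := div_mul_cancel₀ fp h7.ne'
      nlinarith
  -- Step 2
  obtain ⟨n₂, hn₂, x₂, hx₂, hvx₂⟩ := hstep1
  obtain ⟨ρ₂, hρ₂_def⟩ : ∃ ρ₂ : ℝ, ρ₂ = α i₀ / dd := ⟨_, rfl⟩
  have hρ₂0 : 0 ≤ ρ₂ := hρ₂_def ▸ div_nonneg hβ0 hdd0.le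
  have hρ₂1 : ρ₂ < 1 := hρ₂_def ▸ (div_lt_one hdd0).2 (lt_of_le_of_lt (hjm i₀) hdd)
  obtain ⟨fp₂, hfp₂_def⟩ : ∃ fp₂ : ℝ, fp₂ = ‖b i₀‖ / (1 - ρ₂) := ⟨_, rfl⟩
  have hfp₂ : 0 < fp₂ := hfp₂_def ▸ div_pos hB (by linarith)
  have h1ρ₂ : (1:ℝ) - ρ₂ ≠ 0 := ne_of_gt (by linarith)
  have hfp₂id : ρ₂ * fp₂ + ‖b i₀‖ = fp₂ := by
    rw [hfp₂_def]
    field_simp [h1ρ₂]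
    ring
  have hinv2 : ∀ k : ℕ, ∃ x ∈ Kn f K₀ (n₂ + k),
      fp₂ * (1 - ρ₂ ^ k) ≤ (inner ℝ (f i₀ x) (‖b i₀‖⁻¹ • b i₀) : ℝ) := by
    intro k
    induction k with
    | zero =>
      refine ⟨x₂, by simpa using hx₂, ?_⟩
      simp only [pow_zero, sub_self, mul_zero]
      exact hvx₂
    | succ k ih =>
      obtain ⟨x, hx, hval⟩ := ih
      have hvnn : 0 ≤ (inner ℝ (f i₀ x) (‖b i₀‖⁻¹ • b i₀) : ℝ) := by
        have h8 : 0 ≤ 1 - ρ₂ ^ k := by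
          have := pow_le_one₀ hρ₂0 hρ₂1.le (n := k)
          linarith
        nlinarith
      obtain ⟨y, hy, hvy⟩ := val_rec hfc hK₀c hK₀ne hpos hα hf hx i₀ hb0
      refine ⟨y, hy, ?_⟩
      rw [hvy]
      have hdn := hpos (n₂ + k)
      have hratio : ρ₂ ≤ α i₀ * (dn f K₀ (n₂ + k))⁻¹ := by
        rw [hρ₂_def, div_eq_mul_inv]
        exact mul_le_mul_of_nonneg_left
          (inv_anti₀ hdn (hup (n₂+k) (by omega))) hβ0
      have h2 : ρ₂ * (inner ℝ (f i₀ x) (‖b i₀‖⁻¹ • b i₀) : ℝ)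
          ≤ α i₀ * (dn f K₀ (n₂ + k))⁻¹ * (inner ℝ (f i₀ x) (‖b i₀‖⁻¹ • b i₀) : ℝ) :=
        mul_le_mul_of_nonneg_right hratio hvnn
      have h3 : ρ₂ * (fp₂ * (1 - ρ₂ ^ k)) ≤ ρ₂ * (inner ℝ (f i₀ x) (‖b i₀‖⁻¹ • b i₀) : ℝ) :=
        mul_le_mul_of_nonneg_left hval hρ₂0
      have h4 : fp₂ * (1 - ρ₂ ^ (k+1)) = ρ₂ * (fp₂ * (1 - ρ₂ ^ k)) + ‖b i₀‖ := by
        have h9 : ρ₂ ^ (k+1) = ρ₂ * ρ₂ ^ k := pow_succ' ρ₂ k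
        rw [h9]
        nlinarith
      linarith
  have hble : ∀ k : ℕ, fp₂ * (1 - ρ₂ ^ k) ≤ dd := by
    intro k
    obtain ⟨x, hx, hval⟩ := hinv2 k
    have h9 := val_le hfc hK₀c hK₀ne hx i₀ hb0
    have h10 := hup (n₂ + k) (by omega)
    linarith
  have hfp₂dd : fp₂ ≤ dd := by
    by_contra hgt
    push_neg at hgt
    obtain ⟨k, hk⟩ := exists_pow_lt_of_lt_one
      (div_pos (by linarith : (0:ℝ) < fp₂ - dd) hfp₂) hρ₂1
    have h11 : fp₂ * ρ₂ ^ k < fp₂ - dd := by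
      calc fp₂ * ρ₂ ^ k < fp₂ * ((fp₂ - dd) / fp₂) := mul_lt_mul_of_pos_left hk hfp₂
        _ = fp₂ - dd := mul_div_cancel₀ _ hfp₂.ne'
    have := hble k
    nlinarith
  have h12 : ‖b i₀‖ ≤ dd * (1 - ρ₂) := by
    rw [hfp₂_def, div_le_iff₀ (by linarith : (0:ℝ) < 1 - ρ₂)] at hfp₂dd
    linarith
  have h13 : dd * (1 - ρ₂) = dd - α i₀ := by
    rw [hρ₂_def]
    field_simp
  linarith

end CaseA

end Stmt5Aux

/-- Lemma `lem:limefhid`. For an IFS of homotheties `f_i(x) = α_i x + b_i`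
(`α_i ≥ 0`), with `α_j = max_i α_i`, the sequence `(d_n)` converges to some `d > 0`; if
`d = α_j` then `b_j = 0`, if `d > α_j` then `d = max_i (α_i + ‖b_i‖)`, and if `d < α_j` then
`d = α_j − ‖b_j‖`. -/
theorem stmt5 {D p : ℕ}
    (α : Fin (p + 1) → ℝ) (hα : ∀ i, 0 ≤ α i)
    (b : Fin (p + 1) → EuclideanSpace ℝ (Fin D))
    (f : Fin (p + 1) → EuclideanSpace ℝ (Fin D) → EuclideanSpace ℝ (Fin D))
    (hf : ∀ i x, f i x = α i • x + b i)
    (j : Fin (p + 1)) (hj : α j = Finset.univ.sup' Finset.univ_nonempty α)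
    (K₀ : Set (EuclideanSpace ℝ (Fin D))) (hK₀c : IsCompact K₀) (hK₀ne : K₀.Nonempty)
    (hpos : ∀ n, 0 < rad (hutch f ((hutchRho f)^[n] K₀))) :
    ∃ d : ℝ, 0 < d ∧
      Tendsto (fun n => rad (hutch f ((hutchRho f)^[n] K₀))) atTop (𝓝 d) ∧
      (d = α j → b j = 0) ∧
      (α j < d → d = Finset.univ.sup' Finset.univ_nonempty (fun i => α i + ‖b i‖)) ∧
      (d < α j → d = α j - ‖b j‖) := by
  classical
  have hfc : ∀ i, Continuous (f i) := by
    intro i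
    have hfi : f i = fun x => α i • x + b i := funext (hf i)
    rw [hfi]
    exact (continuous_id.const_smul (α i)).add continuous_const
  have hpos' : ∀ n, 0 < Stmt5Aux.dn f K₀ n := hpos
  obtain ⟨i₀, -, hi₀e⟩ := Finset.exists_mem_eq_sup' Finset.univ_nonempty
    (fun i => α i + ‖b i‖)
  have hi₀ : ∀ i, α i + ‖b i‖ ≤ α i₀ + ‖b i₀‖ := fun i => by
    rw [← hi₀e]
    exact Finset.le_sup' (fun i => α i + ‖b i‖) (Finset.mem_univ i)
  have hjm : ∀ i, α i ≤ α j := fun i => by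
    rw [hj]
    exact Finset.le_sup' α (Finset.mem_univ i)
  by_cases hcase : ∃ N, 1 ≤ N ∧ α j ≤ Stmt5Aux.dn f K₀ N
  · obtain ⟨N, hN1, hNA⟩ := hcase
    have hge : ∀ n, N ≤ n → α j ≤ Stmt5Aux.dn f K₀ n := by
      intro n hn
      induction n, hn using Nat.le_induction with
      | base => exact hNA
      | succ n hn ih =>
        exact le_trans ih (Stmt5Aux.dn_mono hfc hK₀c hK₀ne hpos' hα hf
          (le_trans hN1 hn) (fun i => le_trans (hjm i) ih))
    have hmono2 : ∀ m n, N ≤ m → m ≤ n → Stmt5Aux.dn f K₀ m ≤ Stmt5Aux.dn f K₀ n := by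
      intro m n hNm hmn
      induction n, hmn using Nat.le_induction with
      | base => exact le_rfl
      | succ n hmn ih =>
        exact le_trans ih (Stmt5Aux.dn_mono hfc hK₀c hK₀ne hpos' hα hf
          (le_trans hN1 (le_trans hNm hmn)) (fun i => le_trans (hjm i) (hge n (le_trans hNm hmn))))
    have hmonoe : Monotone (fun k => Stmt5Aux.dn f K₀ (k + N)) :=
      monotone_nat_of_le_succ (fun k => hmono2 (k+N) (k+1+N) (by omega) (by omega))
    have hbdd : BddAbove (Set.range (fun k => Stmt5Aux.dn f K₀ (k + N))) := by
      refine ⟨α i₀ + ‖b i₀‖, ?_⟩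
      rintro _ ⟨k, rfl⟩
      exact Stmt5Aux.dn_le_of_bound hfc hK₀c hK₀ne hpos' hα hf hi₀ (n := k + N) (by omega)
    have htende : Tendsto (fun k => Stmt5Aux.dn f K₀ (k + N)) atTop
        (𝓝 (⨆ k, Stmt5Aux.dn f K₀ (k + N))) := tendsto_atTop_ciSup hmonoe hbdd
    obtain ⟨dd, hdd_def⟩ : ∃ dd : ℝ, dd = ⨆ k, Stmt5Aux.dn f K₀ (k + N) := ⟨_, rfl⟩
    have htend : Tendsto (fun n => Stmt5Aux.dn f K₀ n) atTop (𝓝 dd) := by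
      rw [hdd_def]
      exact (tendsto_add_atTop_iff_nat N).1 htende
    have hlee : ∀ k, Stmt5Aux.dn f K₀ (k + N) ≤ dd := by
      intro k
      rw [hdd_def]
      exact le_ciSup hbdd k
    have hNle : Stmt5Aux.dn f K₀ N ≤ dd := by
      have := hlee 0
      rwa [zero_add] at this
    have hAd : α j ≤ dd := le_trans hNA hNle
    have hd0 : 0 < dd := lt_of_lt_of_le (hpos' N) hNle
    have hdM : dd ≤ α i₀ + ‖b i₀‖ := by
      rw [hdd_def]
      exact ciSup_le fun k =>
        Stmt5Aux.dn_le_of_bound hfc hK₀c hK₀ne hpos' hα hf hi₀ (n := k + N) (by omega)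
    rcases eq_or_lt_of_le hAd with heqA | hltA
    · -- dd = α j : the sequence is eventually constant equal to α j
      have heq : ∀ n, N ≤ n → Stmt5Aux.dn f K₀ n = α j := by
        intro n hn
        refine le_antisymm ?_ (hge n hn)
        have h1 : Stmt5Aux.dn f K₀ n = Stmt5Aux.dn f K₀ ((n - N) + N) := by
          congr 1
          omega
        rw [h1, heqA]
        exact hlee (n - N)
      have hbj := Stmt5Aux.caseA_eq hfc hK₀c hK₀ne hpos' hα hf j N hN1 heq
      refine ⟨dd, hd0, htend, fun _ => hbj, ?_, ?_⟩
      · intro h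
        rw [← heqA] at h
        exact absurd h (lt_irrefl _)
      · intro h
        rw [← heqA] at h
        exact absurd h (lt_irrefl _)
    · -- α j < dd
      have hexN₁ : ∃ N₁, N ≤ N₁ ∧ α j < Stmt5Aux.dn f K₀ N₁ := by
        by_contra hno
        push_neg at hno
        have hle : dd ≤ α j := by
          rw [hdd_def]
          exact ciSup_le fun k => hno (k+N) (by omega)
        exact absurd hltA (not_lt.2 hle)
      obtain ⟨N₁, hNN₁, hDgt⟩ := hexN₁
      have hlow : ∀ n, N₁ ≤ n → Stmt5Aux.dn f K₀ N₁ ≤ Stmt5Aux.dn f K₀ n :=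
        fun n hn => hmono2 N₁ n hNN₁ hn
      have hup : ∀ n, N₁ ≤ n → Stmt5Aux.dn f K₀ n ≤ dd := by
        intro n hn
        have h1 : Stmt5Aux.dn f K₀ n = Stmt5Aux.dn f K₀ ((n - N) + N) := by
          congr 1
          omega
        rw [h1]
        exact hlee (n - N)
      have hMd : α i₀ + ‖b i₀‖ ≤ dd :=
        Stmt5Aux.caseA_gt hfc hK₀c hK₀ne hpos' hα hf j hjm i₀ dd hi₀ N₁
          (le_trans hN1 hNN₁) hDgt hlow hup hltA
      have hdeq : dd = Finset.univ.sup' Finset.univ_nonempty (fun i => α i + ‖b i‖) := by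
        rw [hi₀e]
        exact le_antisymm hdM hMd
      refine ⟨dd, hd0, htend, ?_, fun _ => hdeq, ?_⟩
      · intro h
        rw [h] at hltA
        exact absurd hltA (lt_irrefl _)
      · intro h
        exact absurd (lt_trans h hltA) (lt_irrefl _)
  · push_neg at hcase
    have hlt : ∀ n, 1 ≤ n → Stmt5Aux.dn f K₀ n < α j := fun n hn => hcase n hn
    have hcB := Stmt5Aux.caseB hfc hK₀c hK₀ne hpos' hα hf j hlt
    refine ⟨α j - ‖b j‖, ?_, ?_, ?_, ?_, fun _ => rfl⟩
    · rw [← hcB 1 le_rfl]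
      exact hpos' 1
    · exact tendsto_atTop_of_eventually_const (i₀ := 1) (fun n hn => hcB n hn)
    · intro h
      have hb0 : ‖b j‖ = 0 := by linarith
      exact norm_eq_zero.1 hb0
    · intro h
      exact absurd h (by linarith [norm_nonneg (b j)])
end
end

section
/- Let p ≥ 1 linear maps f_i(x) = A_i x on ℝ^D and let K_0 be a nonempty compact subset of ℝ^D with well-defined renormalized orbit (K_n)_n and normalizing sequence (d_n)_n. Assume there exists d > 0 such that the sequence (H_d^n(K_0))_n, where H_d = (1/d)H, converges in the Hausdorff metric to a nonempty compact set L with ρ(L) ≠ 0. Then: (i) (d_n)_n converges to d and d ≤ σ_ℳ, the joint spectral radius of ℳ = {A_1,…,A_p}; (ii) (K_n)_n converges in the Hausdorff metric to K = (1/ρ(L)) L. -/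
open Metric Filter Pointwise Topology

noncomputable section

/-- The joint spectral radius
`σ_ℳ = limsup_n (sup over words of length n of ‖A_{i_1} ⋯ A_{i_n}‖)^(1/n)`. -/
def jsr {D p : ℕ} (A : Fin (p + 1) → EuclideanSpace ℝ (Fin D) →L[ℝ] EuclideanSpace ℝ (Fin D)) :
    ℝ :=
  Filter.limsup
    (fun n => (⨆ w : Fin n → Fin (p + 1), ‖(List.ofFn fun j => A (w j)).prod‖) ^ ((n : ℝ)⁻¹))
    atTop


variable {D p : ℕ} {f : Fin (p + 1) → EuclideanSpace ℝ (Fin D) → EuclideanSpace ℝ (Fin D)}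
  {K L : Set (EuclideanSpace ℝ (Fin D))}

lemma bddAbove_norm_image (hK : IsCompact K) : BddAbove (norm '' K) :=
  (hK.image continuous_norm).bddAbove

lemma norm_le_rad (hK : IsCompact K) {x} (hx : x ∈ K) : ‖x‖ ≤ rad K :=
  le_csSup (bddAbove_norm_image hK) ⟨x, hx, rfl⟩

lemma rad_nonneg (hK : IsCompact K) (hne : K.Nonempty) : 0 ≤ rad K := by
  obtain ⟨x, hx⟩ := hne
  exact (norm_nonneg x).trans (norm_le_rad hK hx)

lemma rad_le (hne : K.Nonempty) {r : ℝ} (h : ∀ x ∈ K, ‖x‖ ≤ r) : rad K ≤ r :=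
  csSup_le (hne.image _) (by rintro - ⟨x, hx, rfl⟩; exact h x hx)

lemma exists_norm_eq_rad (hK : IsCompact K) (hne : K.Nonempty) : ∃ x ∈ K, ‖x‖ = rad K := by
  obtain ⟨x, hx, hmax⟩ := hK.exists_isMaxOn hne continuous_norm.continuousOn
  refine ⟨x, hx, le_antisymm (norm_le_rad hK hx) (rad_le hne ?_)⟩
  · intro y hy; exact hmax hy

lemma rad_smul {c : ℝ} (hc : 0 < c) (hK : IsCompact K) (hne : K.Nonempty) :
    rad (c • K) = c * rad K := by
  apply le_antisymm
  · refine rad_le (hne.smul_set) ?_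
    rintro - ⟨x, hx, rfl⟩
    rw [norm_smul, Real.norm_eq_abs, abs_of_pos hc]
    exact mul_le_mul_of_nonneg_left (norm_le_rad hK hx) hc.le
  · rw [← le_div_iff₀' hc]
    refine rad_le hne ?_
    intro x hx
    rw [le_div_iff₀' hc]
    calc c * ‖x‖ = ‖c • x‖ := by rw [norm_smul, Real.norm_eq_abs, abs_of_pos hc]
    _ ≤ rad (c • K) := norm_le_rad (hK.smul _) ⟨x, hx, rfl⟩

lemma rad_le_add_hausdorffDist (hK : IsCompact K) (hKne : K.Nonempty)
    (hL : IsCompact L) (hLne : L.Nonempty) : rad K ≤ rad L + hausdorffDist K L := by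
  have fin : EMetric.hausdorffEdist K L ≠ ⊤ :=
    hausdorffEdist_ne_top_of_nonempty_of_bounded hKne hLne hK.isBounded hL.isBounded
  refine rad_le hKne fun x hx => ?_
  obtain ⟨y, hy, hxy⟩ := hL.exists_infDist_eq_dist hLne x
  calc ‖x‖ ≤ ‖y‖ + dist x y := by
        have := norm_le_norm_add_norm_sub' x y  -- maybe wrong; use triangle
        simpa [dist_eq_norm] using norm_le_insert' x y
  _ ≤ rad L + hausdorffDist K L := by
      refine add_le_add (norm_le_rad hL hy) ?_
      rw [← hxy]
      exact infDist_le_hausdorffDist_of_mem hx fin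

lemma abs_rad_sub_le (hK : IsCompact K) (hKne : K.Nonempty)
    (hL : IsCompact L) (hLne : L.Nonempty) :
    |rad K - rad L| ≤ hausdorffDist K L := by
  rw [abs_sub_le_iff]
  constructor
  · linarith [rad_le_add_hausdorffDist hK hKne hL hLne]
  · rw [hausdorffDist_comm]
    linarith [rad_le_add_hausdorffDist hL hLne hK hKne]

variable {A : Fin (p + 1) → EuclideanSpace ℝ (Fin D) →L[ℝ] EuclideanSpace ℝ (Fin D)}

lemma hutch_compact (hf : ∀ i x, f i x = A i x) (hK : IsCompact K) : IsCompact (hutch f K) := by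
  refine isCompact_iUnion fun i => ?_
  have : f i = fun x => A i x := funext (hf i)
  rw [this]
  exact hK.image (A i).continuous

lemma hutch_nonempty (hne : K.Nonempty) : (hutch f K).Nonempty := by
  obtain ⟨x, hx⟩ := hne
  exact ⟨f 0 x, Set.mem_iUnion.2 ⟨0, ⟨x, hx, rfl⟩⟩⟩

lemma hutch_smul (hf : ∀ i x, f i x = A i x) (c : ℝ) (K : Set (EuclideanSpace ℝ (Fin D))) :
    hutch f (c • K) = c • hutch f K := by
  unfold hutch
  rw [Set.smul_set_iUnion]
  refine Set.iUnion_congr fun i => ?_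
  ext y
  constructor
  · rintro ⟨-, ⟨x, hx, rfl⟩, rfl⟩
    exact ⟨f i x, ⟨x, hx, rfl⟩, by simp [hf, map_smul]⟩
  · rintro ⟨-, ⟨x, hx, rfl⟩, rfl⟩
    exact ⟨c • x, ⟨x, hx, rfl⟩, by simp [hf, map_smul]⟩

lemma hausdorffDist_smul_le {c : ℝ} (hc : 0 ≤ c) (hK : IsCompact K) (hKne : K.Nonempty)
    (hL : IsCompact L) (hLne : L.Nonempty) :
    hausdorffDist (c • K) (c • L) ≤ c * hausdorffDist K L := by
  have fin : EMetric.hausdorffEdist K L ≠ ⊤ :=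
    hausdorffEdist_ne_top_of_nonempty_of_bounded hKne hLne hK.isBounded hL.isBounded
  have fin' : EMetric.hausdorffEdist L K ≠ ⊤ :=
    hausdorffEdist_ne_top_of_nonempty_of_bounded hLne hKne hL.isBounded hK.isBounded
  refine hausdorffDist_le_of_mem_dist
    (mul_nonneg hc hausdorffDist_nonneg) ?_ ?_
  · rintro - ⟨x, hx, rfl⟩
    obtain ⟨y, hy, hxy⟩ := hL.exists_infDist_eq_dist hLne x
    refine ⟨c • y, ⟨y, hy, rfl⟩, ?_⟩
    rw [dist_smul₀, Real.norm_eq_abs, abs_of_nonneg hc]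
    refine mul_le_mul_of_nonneg_left ?_ hc
    rw [← hxy]; exact infDist_le_hausdorffDist_of_mem hx fin
  · rintro - ⟨y, hy, rfl⟩
    obtain ⟨x, hx, hxy⟩ := hK.exists_infDist_eq_dist hKne y
    refine ⟨c • x, ⟨x, hx, rfl⟩, ?_⟩
    rw [dist_smul₀, Real.norm_eq_abs, abs_of_nonneg hc]
    refine mul_le_mul_of_nonneg_left ?_ hc
    calc dist y x = infDist y K := hxy.symm
    _ ≤ hausdorffDist L K := infDist_le_hausdorffDist_of_mem hy fin'
    _ = hausdorffDist K L := hausdorffDist_comm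

lemma hausdorffDist_smul_smul_le (b c : ℝ) (hL : IsCompact L) (hLne : L.Nonempty) :
    hausdorffDist (b • L) (c • L) ≤ |b - c| * rad L := by
  refine hausdorffDist_le_of_mem_dist
    (mul_nonneg (abs_nonneg _) (rad_nonneg hL hLne)) ?_ ?_
  · rintro - ⟨y, hy, rfl⟩
    refine ⟨c • y, ⟨y, hy, rfl⟩, ?_⟩
    rw [dist_eq_norm, ← sub_smul, norm_smul, Real.norm_eq_abs]
    exact mul_le_mul_of_nonneg_left (norm_le_rad hL hy) (abs_nonneg _)
  · rintro - ⟨y, hy, rfl⟩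
    refine ⟨b • y, ⟨y, hy, rfl⟩, ?_⟩
    rw [dist_eq_norm, ← sub_smul, norm_smul, Real.norm_eq_abs, abs_sub_comm]
    exact mul_le_mul_of_nonneg_left (norm_le_rad hL hy) (abs_nonneg _)

lemma mem_hutch_iterate (hf : ∀ i x, f i x = A i x) (K₀ : Set (EuclideanSpace ℝ (Fin D))) :
    ∀ n, ∀ x ∈ (hutch f)^[n] K₀,
      ∃ w : Fin n → Fin (p + 1), ∃ y ∈ K₀, x = (List.ofFn fun j => A (w j)).prod y := by
  intro n
  induction n with
  | zero =>
    intro x hx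
    exact ⟨Fin.elim0, x, hx, by simp⟩
  | succ n ih =>
    intro x hx
    rw [Function.iterate_succ_apply'] at hx
    simp only [hutch, Set.mem_iUnion] at hx
    obtain ⟨i, z, hz, rfl⟩ := hx
    obtain ⟨w, y, hy, rfl⟩ := ih z hz
    refine ⟨Fin.cons i w, y, hy, ?_⟩
    rw [List.ofFn_succ]
    simp [hf, Fin.cons_succ, Fin.cons_zero, List.prod_cons, ContinuousLinearMap.mul_apply]

lemma norm_word_le {A : Fin (p + 1) → EuclideanSpace ℝ (Fin D) →L[ℝ] EuclideanSpace ℝ (Fin D)}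
    {B : ℝ} (hB : ∀ i, ‖A i‖ ≤ B) :
    ∀ n (w : Fin n → Fin (p + 1)), ‖(List.ofFn fun j => A (w j)).prod‖ ≤ B ^ n := by
  intro n
  induction n with
  | zero =>
    intro w
    rw [List.ofFn_zero, List.prod_nil, pow_zero, ContinuousLinearMap.one_def]
    exact ContinuousLinearMap.norm_id_le
  | succ n ih =>
    intro w
    rw [List.ofFn_succ, List.prod_cons]
    have hB0 : 0 ≤ B := (norm_nonneg _).trans (hB 0)
    calc ‖A (w 0) * (List.ofFn fun j => A (w j.succ)).prod‖
        ≤ ‖A (w 0)‖ * ‖(List.ofFn fun j => A (w j.succ)).prod‖ := norm_mul_le _ _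
      _ ≤ B * B ^ n := mul_le_mul (hB _) (ih _) (norm_nonneg _) hB0
      _ = B ^ (n + 1) := by ring

/-- Proposition `prop:linred`. For a linear IFS, if the orbit of `K₀` under
`H_d = (1/d)H` converges to a nonempty compact `L` with `ρ(L) ≠ 0`, then `(d_n)` converges to
`d ≤ σ_ℳ` and the renormalized orbit `(K_n)` converges to `(1/ρ(L)) L`. -/
theorem stmt8 {D p : ℕ}
    (A : Fin (p + 1) → EuclideanSpace ℝ (Fin D) →L[ℝ] EuclideanSpace ℝ (Fin D))
    (f : Fin (p + 1) → EuclideanSpace ℝ (Fin D) → EuclideanSpace ℝ (Fin D))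
    (hf : ∀ i x, f i x = A i x)
    (K₀ : Set (EuclideanSpace ℝ (Fin D))) (hK₀c : IsCompact K₀) (hK₀ne : K₀.Nonempty)
    (hpos : ∀ n, 0 < rad (hutch f ((hutchRho f)^[n] K₀)))
    (d : ℝ) (hdpos : 0 < d)
    (L : Set (EuclideanSpace ℝ (Fin D))) (hLc : IsCompact L) (hLne : L.Nonempty)
    (hradL : rad L ≠ 0)
    (hconv : Tendsto
      (fun n => hausdorffDist ((fun K => d⁻¹ • hutch f K)^[n] K₀) L) atTop (𝓝 0)) :
    (Tendsto (fun n => rad (hutch f ((hutchRho f)^[n] K₀))) atTop (𝓝 d) ∧ d ≤ jsr A) ∧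
    Tendsto (fun n => hausdorffDist ((hutchRho f)^[n] K₀) ((rad L)⁻¹ • L)) atTop (𝓝 0) := by
  classical
  set S : ℕ → Set (EuclideanSpace ℝ (Fin D)) := fun n => (hutch f)^[n] K₀ with hSdef
  have hSsucc : ∀ n, S (n + 1) = hutch f (S n) := fun n => Function.iterate_succ_apply' _ _ _
  have hS0 : S 0 = K₀ := rfl
  have hSc : ∀ n, IsCompact (S n) := by
    intro n; induction n with
    | zero => exact hK₀c
    | succ n ih => rw [hSsucc]; exact hutch_compact hf ih
  have hSne : ∀ n, (S n).Nonempty := by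
    intro n; induction n with
    | zero => exact hK₀ne
    | succ n ih => rw [hSsucc]; exact hutch_nonempty ih
  set r : ℕ → ℝ := fun n => rad (S n) with hrdef
  -- radius of K₀ is positive
  have hr0 : 0 < rad K₀ := by
    rcases (rad_nonneg hK₀c hK₀ne).lt_or_eq with h | h
    · exact h
    · exfalso
      have h0 := hpos 0
      simp only [Function.iterate_zero, id] at h0
      have hK0 : ∀ x ∈ K₀, x = (0 : EuclideanSpace ℝ (Fin D)) := by
        intro x hx
        have := norm_le_rad hK₀c hx
        rw [← h] at this
        exact norm_eq_zero.1 (le_antisymm this (norm_nonneg x))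
      have : rad (hutch f K₀) ≤ 0 := by
        refine rad_le (hutch_nonempty hK₀ne) ?_
        intro x hx
        simp only [hutch, Set.mem_iUnion] at hx
        obtain ⟨i, y, hy, rfl⟩ := hx
        rw [hK0 y hy, hf]
        simp
      linarith
  -- the renormalized orbit identity
  have key : ∀ n, (hutchRho f)^[n + 1] K₀ = (r (n + 1))⁻¹ • S (n + 1) ∧ 0 < r (n + 1) := by
    intro n; induction n with
    | zero =>
      have h0 := hpos 0
      simp only [Function.iterate_zero, id] at h0
      have hS1 : S (0 + 1) = hutch f K₀ := by rw [hSsucc 0, hS0]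
      have hr1 : r (0 + 1) = rad (hutch f K₀) := by rw [hrdef]; simp only [hS1]
      refine ⟨?_, by rw [hr1]; exact h0⟩
      rw [Function.iterate_one, hutchRho, hr1, hS1]
    | succ n ih =>
      obtain ⟨hKn, hrn⟩ := ih
      have hhut : hutch f ((hutchRho f)^[n + 1] K₀) = (r (n + 1))⁻¹ • S (n + 2) := by
        rw [hKn, hutch_smul hf, ← hSsucc]
      have hrad : rad (hutch f ((hutchRho f)^[n + 1] K₀)) = (r (n + 1))⁻¹ * r (n + 2) := by
        rw [hhut, rad_smul (inv_pos.2 hrn) (hSc (n + 2)) (hSne (n + 2))]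
      have hpos' := hpos (n + 1)
      rw [hrad] at hpos'
      have hr2 : 0 < r (n + 2) := by
        have h := mul_pos hrn hpos'
        rwa [mul_inv_cancel_left₀ hrn.ne'] at h
      refine ⟨?_, hr2⟩
      rw [Function.iterate_succ_apply', hutchRho, hrad, hhut, smul_smul]
      congr 1
      field_simp
  have hrpos : ∀ n, 0 < r n := by
    intro n
    cases n with
    | zero => exact hr0
    | succ n => exact (key n).2
  -- the unnormalized renormalized-by-d orbit
  have hT : ∀ n, (fun K => d⁻¹ • hutch f K)^[n] K₀ = (d ^ n)⁻¹ • S n := by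
    intro n; induction n with
    | zero => simp [hS0]
    | succ n ih =>
      rw [Function.iterate_succ_apply', ih, hutch_smul hf, smul_smul, ← hSsucc]
      congr 1
      rw [pow_succ, mul_inv]
      ring
  set a : ℕ → ℝ := fun n => (d ^ n)⁻¹ * r n with hadef
  have hapos : ∀ n, 0 < a n := fun n => mul_pos (inv_pos.2 (pow_pos hdpos n)) (hrpos n)
  set e : ℕ → ℝ := fun n => hausdorffDist ((d ^ n)⁻¹ • S n) L with hedef
  have he : Tendsto e atTop (𝓝 0) := hconv.congr fun n => by rw [hT n]
  have hTc : ∀ n, IsCompact ((d ^ n)⁻¹ • S n) := fun n => (hSc n).smul _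
  have hTne : ∀ n, ((d ^ n)⁻¹ • S n).Nonempty := fun n => (hSne n).smul_set
  have hradT : ∀ n, rad ((d ^ n)⁻¹ • S n) = a n := fun n =>
    rad_smul (inv_pos.2 (pow_pos hdpos n)) (hSc n) (hSne n)
  have hρ : 0 < rad L := (rad_nonneg hLc hLne).lt_of_ne (Ne.symm hradL)
  -- a n → rad L
  have ha : Tendsto a atTop (𝓝 (rad L)) := by
    rw [tendsto_iff_dist_tendsto_zero]
    refine squeeze_zero (fun n => dist_nonneg) (fun n => ?_) he
    rw [Real.dist_eq, ← hradT n]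
    exact abs_rad_sub_le (hTc n) (hTne n) hLc hLne
  -- Part (i), first half: d_n → d
  have part1a : Tendsto (fun n => rad (hutch f ((hutchRho f)^[n] K₀))) atTop (𝓝 d) := by
    have hlim : Tendsto (fun n => d * a (n + 1) / a n) atTop (𝓝 d) := by
      have h1 : Tendsto (fun n => a (n + 1)) atTop (𝓝 (rad L)) :=
        ha.comp (tendsto_add_atTop_nat 1)
      have h2 := (h1.const_mul d).div ha hρ.ne'
      rwa [mul_div_assoc, div_self hρ.ne', mul_one] at h2
    refine hlim.congr' ?_
    rw [EventuallyEq, eventually_atTop]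
    refine ⟨1, fun n hn => ?_⟩
    obtain ⟨m, rfl⟩ := Nat.exists_eq_add_of_le hn
    have hhut : hutch f ((hutchRho f)^[1 + m] K₀) = (r (1 + m))⁻¹ • S (1 + m + 1) := by
      rw [add_comm 1 m]
      rw [(key m).1, hutch_smul hf, ← hSsucc]
    rw [hhut, rad_smul (inv_pos.2 (hrpos _)) (hSc _) (hSne _), hadef]
    have h1 : (d : ℝ) ≠ 0 := hdpos.ne'
    have h2 : r (1 + m) ≠ 0 := (hrpos _).ne'
    have h3 : (d ^ (1 + m) : ℝ) ≠ 0 := (pow_pos hdpos _).ne'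
    field_simp
    ring
  -- Part (i), second half: d ≤ jsr A
  have part1b : d ≤ jsr A := by
    set M : ℕ → ℝ := fun n => ⨆ w : Fin n → Fin (p + 1), ‖(List.ofFn fun j => A (w j)).prod‖
      with hMdef
    have hjsr : jsr A = Filter.limsup (fun n => M n ^ ((n : ℝ)⁻¹)) atTop := rfl
    have hM0 : ∀ n, 0 ≤ M n := by
      intro n
      have h := le_ciSup (f := fun w : Fin n → Fin (p + 1) =>
        ‖(List.ofFn fun j => A (w j)).prod‖) ((Set.finite_range _).bddAbove) (fun _ => 0)
      exact (norm_nonneg _).trans h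
    have hrM : ∀ n, r n ≤ M n * rad K₀ := by
      intro n
      refine rad_le (hSne n) ?_
      intro x hx
      obtain ⟨w, y, hy, rfl⟩ := mem_hutch_iterate hf K₀ n x hx
      have hle : ‖(List.ofFn fun j => A (w j)).prod‖ ≤ M n :=
        le_ciSup (f := fun w : Fin n → Fin (p + 1) => ‖(List.ofFn fun j => A (w j)).prod‖)
          ((Set.finite_range _).bddAbove) w
      calc ‖(List.ofFn fun j => A (w j)).prod y‖
          ≤ ‖(List.ofFn fun j => A (w j)).prod‖ * ‖y‖ := ContinuousLinearMap.le_opNorm _ _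
        _ ≤ M n * rad K₀ := mul_le_mul hle
            (norm_le_rad hK₀c hy) (norm_nonneg _) ((norm_nonneg _).trans hle)
    set B : ℝ := 1 + ∑ i, ‖A i‖ with hBdef
    have hB0 : (0 : ℝ) < B := by
      have : (0:ℝ) ≤ ∑ i, ‖A i‖ := Finset.sum_nonneg fun i _ => norm_nonneg _
      rw [hBdef]; linarith
    have hBi : ∀ i, ‖A i‖ ≤ B := by
      intro i
      have h1 : ‖A i‖ ≤ ∑ j, ‖A j‖ :=
        Finset.single_le_sum (fun j _ => norm_nonneg (A j)) (Finset.mem_univ i)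
      rw [hBdef]; linarith
    have hMB : ∀ n, M n ≤ B ^ n := fun n => ciSup_le fun w => norm_word_le hBi n w
    set c : ℝ := rad L / 2 / rad K₀ with hcdef
    have hc : 0 < c := by rw [hcdef]; positivity
    have hev : ∀ᶠ n in atTop, c * d ^ n ≤ M n := by
      have hev0 : ∀ᶠ n in atTop, rad L / 2 ≤ a n :=
        ha.eventually (eventually_ge_nhds (by linarith))
      filter_upwards [hev0] with n hn
      have h1 : rad L / 2 * d ^ n ≤ r n := by
        calc rad L / 2 * d ^ n ≤ a n * d ^ n :=
              mul_le_mul_of_nonneg_right hn (pow_pos hdpos n).le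
          _ = r n := by rw [hadef]; field_simp
      have h2 := hrM n
      rw [hcdef, div_mul_eq_mul_div, div_le_iff₀ hr0]
      calc rad L / 2 * d ^ n ≤ r n := h1
        _ ≤ M n * rad K₀ := h2
    have hc_lim : Tendsto (fun n : ℕ => c ^ ((n : ℝ)⁻¹)) atTop (𝓝 1) := by
      have h1 : Tendsto (fun n : ℕ => ((n : ℝ))⁻¹) atTop (𝓝 0) :=
        tendsto_inv_atTop_zero.comp tendsto_natCast_atTop_atTop
      have h2 := (Real.continuousAt_const_rpow hc.ne').tendsto.comp h1
      rwa [Real.rpow_zero] at h2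
    have hh : Tendsto (fun n : ℕ => c ^ ((n : ℝ)⁻¹) * d) atTop (𝓝 d) := by
      simpa using hc_lim.mul_const d
    have hhg : ∀ᶠ n : ℕ in atTop, c ^ ((n : ℝ)⁻¹) * d ≤ M n ^ ((n : ℝ)⁻¹) := by
      filter_upwards [hev, eventually_ge_atTop 1] with n hn hn1
      have hn0 : (n : ℝ) ≠ 0 := Nat.cast_ne_zero.2 (by omega)
      have e1 : c ^ ((n : ℝ)⁻¹) * d = (c * d ^ n) ^ ((n : ℝ)⁻¹) := by
        rw [Real.mul_rpow hc.le (pow_pos hdpos n).le, ← Real.rpow_natCast d n,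
          ← Real.rpow_mul hdpos.le, mul_inv_cancel₀ hn0, Real.rpow_one]
      rw [e1]
      exact Real.rpow_le_rpow (by positivity) hn (by positivity)
    have hbdd : IsBoundedUnder (· ≤ ·) atTop (fun n => M n ^ ((n : ℝ)⁻¹)) := by
      refine ⟨max B 1, ?_⟩
      rw [eventually_map]
      filter_upwards [eventually_ge_atTop 1] with n hn
      have hn0 : (n : ℝ) ≠ 0 := Nat.cast_ne_zero.2 (by omega)
      calc M n ^ ((n : ℝ)⁻¹) ≤ (B ^ n) ^ ((n : ℝ)⁻¹) :=
            Real.rpow_le_rpow (hM0 n) (hMB n) (by positivity)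
        _ = B := by
            rw [← Real.rpow_natCast B n, ← Real.rpow_mul hB0.le, mul_inv_cancel₀ hn0,
              Real.rpow_one]
        _ ≤ max B 1 := le_max_left _ _
    have hd_eq : d = Filter.limsup (fun n : ℕ => c ^ ((n : ℝ)⁻¹) * d) atTop := hh.limsup_eq.symm
    rw [hjsr, hd_eq]
    exact limsup_le_limsup hhg (hh.isBoundedUnder_ge.isCoboundedUnder_le) hbdd
  -- Part (ii)
  have hainv : Tendsto (fun n => (a n)⁻¹) atTop (𝓝 (rad L)⁻¹) := ha.inv₀ hρ.ne'
  have part2 : Tendsto (fun n => hausdorffDist ((hutchRho f)^[n] K₀) ((rad L)⁻¹ • L)) atTop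
      (𝓝 0) := by
    have hb : Tendsto (fun n => (a n)⁻¹ * e n + |(a n)⁻¹ - (rad L)⁻¹| * rad L) atTop (𝓝 0) := by
      have t1 : Tendsto (fun n => (a n)⁻¹ * e n) atTop (𝓝 ((rad L)⁻¹ * 0)) := hainv.mul he
      have t2 : Tendsto (fun n => |(a n)⁻¹ - (rad L)⁻¹| * rad L) atTop
          (𝓝 (|(rad L)⁻¹ - (rad L)⁻¹| * rad L)) := ((hainv.sub_const _).abs).mul_const _
      have t3 := t1.add t2
      simpa using t3
    refine squeeze_zero' (Eventually.of_forall fun n => hausdorffDist_nonneg) ?_ hb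
    filter_upwards [eventually_ge_atTop 1] with n hn
    obtain ⟨m, rfl⟩ := Nat.exists_eq_add_of_le hn
    have hKn : (hutchRho f)^[1 + m] K₀
        = (a (1 + m))⁻¹ • ((d ^ (1 + m))⁻¹ • S (1 + m)) := by
      rw [add_comm 1 m, (key m).1, smul_smul]
      congr 1
      rw [hadef]
      have h1 : (d ^ (m + 1) : ℝ) ≠ 0 := (pow_pos hdpos _).ne'
      have h2 : r (m + 1) ≠ 0 := (hrpos _).ne'
      field_simp
    rw [hKn]
    have fin1 : EMetric.hausdorffEdist
        ((a (1 + m))⁻¹ • ((d ^ (1 + m))⁻¹ • S (1 + m))) ((a (1 + m))⁻¹ • L) ≠ ⊤ :=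
      hausdorffEdist_ne_top_of_nonempty_of_bounded ((hTne _).smul_set) (hLne.smul_set)
        (((hTc _).smul _).isBounded) ((hLc.smul _).isBounded)
    calc hausdorffDist ((a (1 + m))⁻¹ • ((d ^ (1 + m))⁻¹ • S (1 + m))) ((rad L)⁻¹ • L)
        ≤ hausdorffDist ((a (1 + m))⁻¹ • ((d ^ (1 + m))⁻¹ • S (1 + m))) ((a (1 + m))⁻¹ • L)
          + hausdorffDist ((a (1 + m))⁻¹ • L) ((rad L)⁻¹ • L) := hausdorffDist_triangle fin1
      _ ≤ (a (1 + m))⁻¹ * e (1 + m) + |(a (1 + m))⁻¹ - (rad L)⁻¹| * rad L :=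
          add_le_add
            (hausdorffDist_smul_le (inv_pos.2 (hapos _)).le (hTc _) (hTne _) hLc hLne)
            (hausdorffDist_smul_smul_le _ _ hLc hLne)
  exact ⟨⟨part1a, part1b⟩, part2⟩
end
end

section
/- Let ℳ = {A_1,…,A_p} be a set of D×D real matrices such that: (i) for every infinite sequence (i) = (i_1, i_2, …) ∈ {1,…,p}^∞ the products A_{i_n}⋯A_{i_1} converge as n → ∞ to a limit matrix A_{(i)}; and (ii) there is a sequence (ε_n)_n of positive numbers with ε_n → 0 such that ‖A_{(i)} − A_{i_n}⋯A_{i_1}‖ ≤ ε_n for every sequence (i) and every n ≥ 1. Then, for every nonempty compact K_0 ⊆ ℝ^D, the sequence (H^n(K_0))_n converges in the Hausdorff metric to the set L = cl(⋃_{(i) ∈ {1,…,p}^∞} A_{(i)}(K_0)). -/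
open Metric Filter Pointwise Topology

noncomputable section

/-- The left product `A_{i_n} ⋯ A_{i_1}` along the first `n` terms of the sequence `(i)`. -/
def wprod {D p : ℕ} (A : Fin (p + 1) → EuclideanSpace ℝ (Fin D) →L[ℝ] EuclideanSpace ℝ (Fin D))
    (seq : ℕ → Fin (p + 1)) (n : ℕ) : EuclideanSpace ℝ (Fin D) →L[ℝ] EuclideanSpace ℝ (Fin D) :=
  ((List.ofFn fun j : Fin n => A (seq j)).reverse).prod

lemma wprod_congr {D p : ℕ} (A : Fin (p + 1) → EuclideanSpace ℝ (Fin D) →L[ℝ] EuclideanSpace ℝ (Fin D))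
    {seq seq' : ℕ → Fin (p + 1)} (n : ℕ) (h : ∀ j < n, seq j = seq' j) :
    wprod A seq n = wprod A seq' n := by
  have : (fun j : Fin n => A (seq j)) = fun j : Fin n => A (seq' j) :=
    funext fun j => by rw [h j j.2]
  unfold wprod
  rw [this]

lemma wprod_succ {D p : ℕ} (A : Fin (p + 1) → EuclideanSpace ℝ (Fin D) →L[ℝ] EuclideanSpace ℝ (Fin D))
    (seq : ℕ → Fin (p + 1)) (n : ℕ) :
    wprod A seq (n + 1) = A (seq n) * wprod A seq n := by
  unfold wprod
  rw [List.ofFn_succ']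
  simp [List.concat_eq_append]

lemma wprod_zero {D p : ℕ} (A : Fin (p + 1) → EuclideanSpace ℝ (Fin D) →L[ℝ] EuclideanSpace ℝ (Fin D))
    (seq : ℕ → Fin (p + 1)) : wprod A seq 0 = 1 := by
  simp [wprod]

lemma hutch_iter {D p : ℕ}
    (A : Fin (p + 1) → EuclideanSpace ℝ (Fin D) →L[ℝ] EuclideanSpace ℝ (Fin D))
    (f : Fin (p + 1) → EuclideanSpace ℝ (Fin D) → EuclideanSpace ℝ (Fin D))
    (hf : ∀ i x, f i x = A i x) (K₀ : Set (EuclideanSpace ℝ (Fin D))) (n : ℕ) :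
    (hutch f)^[n] K₀ = ⋃ seq : ℕ → Fin (p + 1), (wprod A seq n) '' K₀ := by
  induction n with
  | zero =>
    simp only [Function.iterate_zero, id_eq, wprod_zero]
    simp only [ContinuousLinearMap.one_apply, Set.image_id']
    exact (Set.iUnion_const (ι := ℕ → Fin (p + 1)) K₀).symm
  | succ n ih =>
    rw [Function.iterate_succ_apply', ih]
    ext x
    simp only [hutch, Set.mem_iUnion, Set.mem_image]
    constructor
    · rintro ⟨i, x', ⟨seq, y, hy, rfl⟩, rfl⟩
      refine ⟨fun j => if j < n then seq j else i, y, hy, ?_⟩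
      rw [wprod_succ]
      rw [wprod_congr A n (seq' := seq) (fun j hj => by simp [hj])]
      simp [hf]
    · rintro ⟨seq, y, hy, rfl⟩
      refine ⟨seq n, wprod A seq n y, ⟨seq, y, hy, rfl⟩, ?_⟩
      rw [wprod_succ]
      simp [hf]

/-- Lemma `lem:cvglcp`. If `ℳ = {A_1, …, A_p}` is an LCP set whose products
converge uniformly (with rate `ε_n → 0`), then for every nonempty compact `K₀` the orbit
`(H^n(K₀))_n` converges in the Hausdorff metric to
`L = cl(⋃_{(i)} A_{(i)}(K₀))`. -/
theorem stmt9 {D p : ℕ}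
    (A : Fin (p + 1) → EuclideanSpace ℝ (Fin D) →L[ℝ] EuclideanSpace ℝ (Fin D))
    (f : Fin (p + 1) → EuclideanSpace ℝ (Fin D) → EuclideanSpace ℝ (Fin D))
    (hf : ∀ i x, f i x = A i x)
    (Alim : (ℕ → Fin (p + 1)) → EuclideanSpace ℝ (Fin D) →L[ℝ] EuclideanSpace ℝ (Fin D))
    (hLCP : ∀ seq : ℕ → Fin (p + 1), Tendsto (wprod A seq) atTop (𝓝 (Alim seq)))
    (ε : ℕ → ℝ) (hεpos : ∀ n, 0 < ε n) (hε : Tendsto ε atTop (𝓝 0))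
    (hunif : ∀ (seq : ℕ → Fin (p + 1)) (n : ℕ), 1 ≤ n → ‖Alim seq - wprod A seq n‖ ≤ ε n)
    (K₀ : Set (EuclideanSpace ℝ (Fin D))) (hK₀c : IsCompact K₀) (hK₀ne : K₀.Nonempty) :
    Tendsto (fun n => hausdorffDist ((hutch f)^[n] K₀)
      (closure (⋃ seq : ℕ → Fin (p + 1), (Alim seq) '' K₀))) atTop (𝓝 0) := by
  obtain ⟨r, hr⟩ := hK₀c.isBounded.subset_closedBall 0
  set C := max r 0 with hCdef
  have hC0 : (0 : ℝ) ≤ C := le_max_right _ _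
  have hnorm : ∀ y ∈ K₀, ‖y‖ ≤ C := by
    intro y hy
    have := hr hy
    simp only [mem_closedBall, dist_zero_right] at this
    exact this.trans (le_max_left _ _)
  have key : ∀ n, 1 ≤ n → hausdorffDist ((hutch f)^[n] K₀)
      (closure (⋃ seq : ℕ → Fin (p + 1), (Alim seq) '' K₀)) ≤ ε n * C := by
    intro n hn
    rw [hutch_iter A f hf K₀ n, hausdorffDist_closure₂]
    have hd : ∀ (seq : ℕ → Fin (p + 1)) (y : EuclideanSpace ℝ (Fin D)), y ∈ K₀ →
        dist (wprod A seq n y) (Alim seq y) ≤ ε n * C := by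
      intro seq y hy
      rw [dist_eq_norm, ← ContinuousLinearMap.sub_apply]
      calc ‖(wprod A seq n - Alim seq) y‖ ≤ ‖wprod A seq n - Alim seq‖ * ‖y‖ :=
            (wprod A seq n - Alim seq).le_opNorm y
        _ ≤ ε n * C := by
            rw [norm_sub_rev]
            exact mul_le_mul (hunif seq n hn) (hnorm y hy) (norm_nonneg _) (hεpos n).le
    apply hausdorffDist_le_of_mem_dist (mul_nonneg (hεpos n).le hC0)
    · rintro x hx
      simp only [Set.mem_iUnion, Set.mem_image] at hx
      obtain ⟨seq, y, hy, rfl⟩ := hx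
      exact ⟨Alim seq y, Set.mem_iUnion.2 ⟨seq, Set.mem_image_of_mem _ hy⟩, hd seq y hy⟩
    · rintro z hz
      simp only [Set.mem_iUnion, Set.mem_image] at hz
      obtain ⟨seq, y, hy, rfl⟩ := hz
      exact ⟨wprod A seq n y, Set.mem_iUnion.2 ⟨seq, Set.mem_image_of_mem _ hy⟩,
        by rw [dist_comm]; exact hd seq y hy⟩
  apply squeeze_zero' (Eventually.of_forall fun n => hausdorffDist_nonneg)
  · filter_upwards [eventually_ge_atTop 1] with n hn
    exact key n hn
  · simpa using hε.mul_const C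
end
end

section
/- Let p ≥ 1 linear maps f_i : ℝ² → ℝ² of the form f_i(x) = A_i x where each A_i is a positive stochastic 2×2 matrix (all entries positive, each row summing to 1). Then for every nonempty compact K_0 ⊆ ℝ², the sequence (H^n(K_0))_n converges in the Hausdorff metric to a set of the form L = cl(⋃_{v_0 ∈ K_0} {(x,x) : x ∈ h_{v_0}(Γ)}), where each h_{v_0} : ℝ → ℝ is an affine map depending on v_0 and on the f_i, and Γ is the attractor of a contractive IFS {g_1,…,g_p} of affine maps g_i : ℝ → ℝ depending only on the f_i. (Formally: there exist affine contractions g_1,…,g_p on ℝ with attractor Γ and an assignment v_0 ↦ h_{v_0} of affine maps on ℝ such that the stated convergence holds.) -/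
open Metric Filter Pointwise Topology

noncomputable section

/-- The point `(x, x)` on the diagonal of `ℝ²`. -/
def diagPt (x : ℝ) : EuclideanSpace ℝ (Fin 2) := (EuclideanSpace.equiv (Fin 2) ℝ).symm ![x, x]

/-- Distance bound in `ℝ²` by the sum of coordinate distances. -/
lemma dist_le_coord (u y : EuclideanSpace ℝ (Fin 2)) :
    dist u y ≤ |u 0 - y 0| + |u 1 - y 1| := by
  rw [EuclideanSpace.dist_eq, Fin.sum_univ_two]
  simp only [Real.dist_eq]
  rw [show |u 0 - y 0| + |u 1 - y 1| = Real.sqrt ((|u 0 - y 0| + |u 1 - y 1|)^2) from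
    (Real.sqrt_sq (by positivity)).symm]
  apply Real.sqrt_le_sqrt
  nlinarith [sq_abs (u 0 - y 0), sq_abs (u 1 - y 1),
    mul_nonneg (abs_nonneg (u 0 - y 0)) (abs_nonneg (u 1 - y 1))]

set_option maxHeartbeats 1600000 in
/-- Proposition `prop:limstoc2`. For linear maps of `ℝ²` given by positive
stochastic matrices `A_i`, the orbit `(H^n(K₀))_n` of every nonempty compact `K₀` converges in
the Hausdorff metric to a set `L = cl(⋃_{v₀ ∈ K₀} {(x,x) : x ∈ h_{v₀}(Γ)})`, where the
`h_{v₀}` are affine maps of `ℝ` and `Γ` is the attractor of a contractive affine IFS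
`{g_1, …, g_p}` on `ℝ` depending only on the `f_i`. -/
theorem stmt10 {p : ℕ}
    (A : Fin (p + 1) → Matrix (Fin 2) (Fin 2) ℝ)
    (hApos : ∀ i k l, 0 < A i k l)
    (hAstoch : ∀ i k, A i k 0 + A i k 1 = 1)
    (f : Fin (p + 1) → EuclideanSpace ℝ (Fin 2) → EuclideanSpace ℝ (Fin 2))
    (hf : ∀ i x, f i x = Matrix.toEuclideanLin (A i) x)
    (K₀ : Set (EuclideanSpace ℝ (Fin 2))) (hK₀c : IsCompact K₀) (hK₀ne : K₀.Nonempty) :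
    ∃ (gc gb : Fin (p + 1) → ℝ), (∀ i, |gc i| < 1) ∧
    ∃ Γ : Set ℝ, IsCompact Γ ∧ Γ.Nonempty ∧
      (⋃ i, (fun x => gc i * x + gb i) '' Γ) = Γ ∧
    ∃ hc hb : EuclideanSpace ℝ (Fin 2) → ℝ,
      Tendsto (fun n => hausdorffDist ((hutch f)^[n] K₀)
        (closure (⋃ v₀ ∈ K₀, (fun t : ℝ => diagPt (hc v₀ * t + hb v₀)) '' Γ)))
        atTop (𝓝 0) := by
  -- the contraction coefficients and translations
  set c : Fin (p + 1) → ℝ := fun i => A i 1 1 - A i 0 1 with hc_def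
  set b : Fin (p + 1) → ℝ := fun i => A i 0 1 with hb_def
  -- coordinates of `f i`
  have hfc : ∀ i (x : EuclideanSpace ℝ (Fin 2)) (k : Fin 2),
      f i x k = A i k 0 * x 0 + A i k 1 * x 1 := by
    intro i x k
    rw [hf]
    simp [Matrix.toEuclideanLin_apply, Matrix.mulVec, dotProduct, Fin.sum_univ_two]
    fin_cases k <;> rfl
  have hf0 : ∀ i (x : EuclideanSpace ℝ (Fin 2)),
      f i x 0 = x 0 - b i * (x 0 - x 1) := by
    intro i x
    have h := hAstoch i 0
    rw [hfc]
    have : A i 0 0 = 1 - A i 0 1 := by linarith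
    rw [this]; ring
  have hfd : ∀ i (x : EuclideanSpace ℝ (Fin 2)),
      f i x 0 - f i x 1 = c i * (x 0 - x 1) := by
    intro i x
    have h0 := hAstoch i 0
    have h1 := hAstoch i 1
    rw [hfc, hfc]
    have e0 : A i 0 0 = 1 - A i 0 1 := by linarith
    have e1 : A i 1 0 = 1 - A i 1 1 := by linarith
    rw [e0, e1]; simp only [hc_def]; ring
  -- the contraction ratio bound
  have hclt : ∀ i, |c i| < 1 := by
    intro i
    have h0 := hAstoch i 0
    have h1 := hAstoch i 1
    have p00 := hApos i 0 0
    have p01 := hApos i 0 1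
    have p10 := hApos i 1 0
    have p11 := hApos i 1 1
    rw [abs_lt]
    constructor <;> simp only [hc_def] <;> nlinarith
  have huniv : (Finset.univ : Finset (Fin (p + 1))).Nonempty := Finset.univ_nonempty
  set r : ℝ := Finset.univ.sup' huniv (fun i => |c i|) with hr_def
  have hrle : ∀ i, |c i| ≤ r := by
    intro i
    rw [hr_def]
    exact Finset.le_sup' (fun j => |c j|) (Finset.mem_univ i)
  have hr0 : 0 ≤ r := le_trans (abs_nonneg (c 0)) (hrle 0)
  have hr1 : r < 1 := by
    rw [hr_def, Finset.sup'_lt_iff]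
    exact fun i _ => hclt i
  -- the IFS maps on ℝ
  set g : Fin (p + 1) → ℝ → ℝ := fun i x => c i * x + b i with hg_def
  have hglip : ∀ i (x y : ℝ), dist (g i x) (g i y) = |c i| * dist x y := by
    intro i x y
    simp only [hg_def, Real.dist_eq, ← abs_mul]
    ring_nf
  -- the Hutchinson operator on nonempty compacts of ℝ
  set T : TopologicalSpace.NonemptyCompacts ℝ → TopologicalSpace.NonemptyCompacts ℝ := fun K =>
    ⟨⟨⋃ i, g i '' (K : Set ℝ), isCompact_iUnion fun i => K.isCompact.image
      ((continuous_const.mul continuous_id).add continuous_const)⟩,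
      Set.nonempty_iUnion.mpr ⟨0, K.nonempty.image _⟩⟩ with hT_def
  have hTset : ∀ K : TopologicalSpace.NonemptyCompacts ℝ, (T K : Set ℝ) = ⋃ i, g i '' (K : Set ℝ) := fun K => rfl
  have hTcontr : ∀ K K' : TopologicalSpace.NonemptyCompacts ℝ, dist (T K) (T K') ≤ r * dist K K' := by
    intro K K'
    rw [Metric.NonemptyCompacts.dist_eq, Metric.NonemptyCompacts.dist_eq, hTset, hTset]
    have key : ∀ (S S' : TopologicalSpace.NonemptyCompacts ℝ), ∀ x ∈ ⋃ i, g i '' (S : Set ℝ),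
        ∃ y ∈ ⋃ i, g i '' (S' : Set ℝ), dist x y ≤ r * hausdorffDist (S : Set ℝ) S' := by
      intro S S' x hx
      obtain ⟨i, a, ha, rfl⟩ : ∃ i a, a ∈ (S : Set ℝ) ∧ g i a = x := by
        simpa [Set.mem_iUnion] using hx
      obtain ⟨y, hy, hdy⟩ := S'.isCompact.exists_infDist_eq_dist S'.nonempty a
      refine ⟨g i y, Set.mem_iUnion.mpr ⟨i, Set.mem_image_of_mem _ hy⟩, ?_⟩
      rw [hglip]
      have h1 : dist a y ≤ hausdorffDist (S : Set ℝ) S' := by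
        rw [← hdy]
        exact infDist_le_hausdorffDist_of_mem ha
          (hausdorffEdist_ne_top_of_nonempty_of_bounded S.nonempty S'.nonempty
            S.isCompact.isBounded S'.isCompact.isBounded)
      calc |c i| * dist a y ≤ r * dist a y := by
            apply mul_le_mul_of_nonneg_right (hrle i) dist_nonneg
        _ ≤ r * hausdorffDist (S : Set ℝ) S' := by
            apply mul_le_mul_of_nonneg_left h1 hr0
    apply hausdorffDist_le_of_mem_dist (mul_nonneg hr0 hausdorffDist_nonneg)
    · exact key K K'
    · intro y hy
      obtain ⟨x, hx, hd⟩ := key K' K y hy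
      have hcomm : hausdorffDist (K' : Set ℝ) K = hausdorffDist (K : Set ℝ) K' :=
        hausdorffDist_comm
      exact ⟨x, hx, by rwa [hcomm] at hd⟩
  haveI : Nonempty (TopologicalSpace.NonemptyCompacts ℝ) :=
    ⟨⟨⟨{0}, isCompact_singleton⟩, Set.singleton_nonempty 0⟩⟩
  have hcw : ContractingWith ⟨r, hr0⟩ T := by
    constructor
    · exact_mod_cast hr1
    · exact LipschitzWith.of_dist_le_mul hTcontr
  set Γnc : TopologicalSpace.NonemptyCompacts ℝ := hcw.fixedPoint T with hΓnc_def
  have hfix : T Γnc = Γnc := hcw.fixedPoint_isFixedPt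
  set Γ : Set ℝ := (Γnc : Set ℝ) with hΓ_def
  have hΓc : IsCompact Γ := Γnc.isCompact
  have hΓne : Γ.Nonempty := Γnc.nonempty
  have hΓinv : (⋃ i, g i '' Γ) = Γ := by
    have h := congrArg (fun K : TopologicalSpace.NonemptyCompacts ℝ => (K : Set ℝ)) hfix
    calc (⋃ i, g i '' Γ) = ((T Γnc : TopologicalSpace.NonemptyCompacts ℝ) : Set ℝ) :=
          (hTset Γnc).symm
      _ = Γ := h
  -- bound on Γ
  obtain ⟨γmax, hγmaxΓ, hγmax⟩ := hΓc.exists_isMaxOn hΓne continuous_abs.continuousOn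
  set R : ℝ := |γmax| with hR_def
  have hR : ∀ γ ∈ Γ, |γ| ≤ R := fun γ hγ => hγmax hγ
  have hR0 : 0 ≤ R := abs_nonneg _
  obtain ⟨γ₀, hγ₀⟩ := id hΓne
  -- bound on K₀
  have hcont : Continuous fun v : EuclideanSpace ℝ (Fin 2) => |v 0 - v 1| :=
    ((EuclideanSpace.proj (0 : Fin 2)).continuous.sub
      (EuclideanSpace.proj (1 : Fin 2)).continuous).abs
  obtain ⟨vmax, hvmaxK, hvmax⟩ := hK₀c.exists_isMaxOn hK₀ne hcont.continuousOn
  set M : ℝ := |vmax 0 - vmax 1| with hM_def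
  have hM : ∀ v ∈ K₀, |v 0 - v 1| ≤ M := fun v hv => hvmax hv
  have hM0 : 0 ≤ M := abs_nonneg _
  -- Lemma A: points of H^n K₀ are near the limit set
  have lemA : ∀ n, ∀ u ∈ (hutch f)^[n] K₀, ∃ v ∈ K₀, ∃ σ β : ℝ,
      |σ| ≤ r ^ n ∧ (∀ γ ∈ Γ, σ * γ + β ∈ Γ) ∧
      u 0 = v 0 - (v 0 - v 1) * β ∧ u 0 - u 1 = σ * (v 0 - v 1) := by
    intro n
    induction n with
    | zero =>
      intro u hu
      exact ⟨u, hu, 1, 0, by norm_num, fun γ hγ => by simpa using hγ, by ring, by ring⟩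
    | succ n ih =>
      intro u hu
      rw [Function.iterate_succ_apply'] at hu
      obtain ⟨i, u', hu', rfl⟩ : ∃ i u', u' ∈ (hutch f)^[n] K₀ ∧ f i u' = u := by
        simpa [hutch, Set.mem_iUnion] using hu
      obtain ⟨v, hv, σ', β', hσ', hmem, h0, hd⟩ := ih u' hu'
      refine ⟨v, hv, σ' * c i, β' + σ' * b i, ?_, ?_, ?_, ?_⟩
      · rw [abs_mul, pow_succ]
        exact mul_le_mul hσ' (hrle i) (abs_nonneg _) (pow_nonneg hr0 n)
      · intro γ hγ
        have hgγ : g i γ ∈ Γ := by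
          rw [← hΓinv]
          exact Set.mem_iUnion.mpr ⟨i, Set.mem_image_of_mem _ hγ⟩
        have h2 : σ' * c i * γ + (β' + σ' * b i) = σ' * g i γ + β' := by
          simp only [hg_def]; ring
        rw [h2]
        exact hmem _ hgγ
      · rw [hf0, hd, h0]; ring
      · rw [hfd, hd]; ring
  -- Lemma B: points of the limit set are near H^n S, for any S and starting point
  have lemB : ∀ n (S : Set (EuclideanSpace ℝ (Fin 2))), ∀ v ∈ S, ∀ γ ∈ Γ,
      ∃ u ∈ (hutch f)^[n] S, ∃ σ γ' : ℝ, |σ| ≤ r ^ n ∧ γ' ∈ Γ ∧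
      u 0 = v 0 - (v 0 - v 1) * (γ - σ * γ') ∧ u 0 - u 1 = σ * (v 0 - v 1) := by
    intro n
    induction n with
    | zero =>
      intro S v hv γ hγ
      exact ⟨v, hv, 1, γ, by norm_num, hγ, by ring, by ring⟩
    | succ n ih =>
      intro S v hv γ hγ
      rw [← hΓinv] at hγ
      obtain ⟨i, γ₁, hγ₁, hγeq⟩ : ∃ i γ₁, γ₁ ∈ Γ ∧ g i γ₁ = γ := by
        simpa [Set.mem_iUnion] using hγ
      have hfv : f i v ∈ hutch f S := Set.mem_iUnion.mpr ⟨i, Set.mem_image_of_mem _ hv⟩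
      obtain ⟨u, hu, σ', γ', hσ', hγ', h0, hd⟩ := ih (hutch f S) (f i v) hfv γ₁ hγ₁
      refine ⟨u, by rwa [Function.iterate_succ_apply], c i * σ', γ', ?_, hγ', ?_, ?_⟩
      · rw [abs_mul, pow_succ, mul_comm (r ^ n)]
        exact mul_le_mul (hrle i) hσ' (abs_nonneg _) hr0
      · rw [h0, hfd, hf0, ← hγeq]
        simp only [hg_def]; ring
      · rw [hd, hfd]; ring
  -- the limit set
  set hcf : EuclideanSpace ℝ (Fin 2) → ℝ := fun v => -(v 0 - v 1) with hcf_def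
  set hbf : EuclideanSpace ℝ (Fin 2) → ℝ := fun v => v 0 with hbf_def
  set L₀ : Set (EuclideanSpace ℝ (Fin 2)) :=
    ⋃ v₀ ∈ K₀, (fun t : ℝ => diagPt (hcf v₀ * t + hbf v₀)) '' Γ with hL₀_def
  set C : ℝ := M * (2 * R + 1) with hC_def
  have hC0 : 0 ≤ C := mul_nonneg hM0 (by linarith)
  -- the main Hausdorff distance bound
  have hbound : ∀ n, hausdorffDist ((hutch f)^[n] K₀) (closure L₀) ≤ C * r ^ n := by
    intro n
    rw [hausdorffDist_closure₂]
    have hCr0 : 0 ≤ C * r ^ n := mul_nonneg hC0 (pow_nonneg hr0 n)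
    apply hausdorffDist_le_of_mem_dist hCr0
    · intro u hu
      obtain ⟨v, hv, σ, β, hσ, hmem, h0, hd⟩ := lemA n u hu
      have htΓ : σ * γ₀ + β ∈ Γ := hmem γ₀ hγ₀
      refine ⟨diagPt (hcf v * (σ * γ₀ + β) + hbf v), ?_, ?_⟩
      · exact Set.mem_biUnion hv ⟨σ * γ₀ + β, htΓ, rfl⟩
      · have hy0 : diagPt (hcf v * (σ * γ₀ + β) + hbf v) 0 = hcf v * (σ * γ₀ + β) + hbf v := rfl
        have hy1 : diagPt (hcf v * (σ * γ₀ + β) + hbf v) 1 = hcf v * (σ * γ₀ + β) + hbf v := rfl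
        apply le_trans (dist_le_coord _ _)
        rw [hy0, hy1]
        simp only [hcf_def, hbf_def]
        have e0 : |u 0 - (-(v 0 - v 1) * (σ * γ₀ + β) + v 0)| = |(v 0 - v 1) * σ * γ₀| := by
          rw [h0]; congr 1; ring
        have e1 : |u 1 - (-(v 0 - v 1) * (σ * γ₀ + β) + v 0)| = |(v 0 - v 1) * σ * (γ₀ - 1)| := by
          have : u 1 = u 0 - σ * (v 0 - v 1) := by linarith [hd]
          rw [this, h0]; congr 1; ring
        rw [e0, e1, abs_mul, abs_mul, abs_mul, abs_mul]
        have hvM := hM v hv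
        have hγR := hR γ₀ hγ₀
        have hγ1 : |γ₀ - 1| ≤ R + 1 := by
          calc |γ₀ - 1| ≤ |γ₀| + 1 := by
                calc |γ₀ - 1| ≤ |γ₀| + |(1:ℝ)| := abs_sub _ _
                  _ = |γ₀| + 1 := by norm_num
            _ ≤ R + 1 := by linarith
        have h1 : |v 0 - v 1| * |σ| * |γ₀| ≤ M * r ^ n * R := by
          apply mul_le_mul _ hγR (abs_nonneg _) (by positivity)
          exact mul_le_mul hvM hσ (abs_nonneg _) hM0
        have h2 : |v 0 - v 1| * |σ| * |γ₀ - 1| ≤ M * r ^ n * (R + 1) := by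
          apply mul_le_mul _ hγ1 (abs_nonneg _) (by positivity)
          exact mul_le_mul hvM hσ (abs_nonneg _) hM0
        calc |v 0 - v 1| * |σ| * |γ₀| + |v 0 - v 1| * |σ| * |γ₀ - 1|
            ≤ M * r ^ n * R + M * r ^ n * (R + 1) := add_le_add h1 h2
          _ = C * r ^ n := by rw [hC_def]; ring
    · intro y hy
      simp only [hL₀_def, Set.mem_iUnion, Set.mem_image] at hy
      obtain ⟨v, hv, t, htΓ, rfl⟩ := hy
      obtain ⟨u, hu, σ, γ', hσ, hγ', h0, hd⟩ := lemB n K₀ v hv t htΓ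
      refine ⟨u, hu, ?_⟩
      rw [dist_comm]
      have hy0 : diagPt (hcf v * t + hbf v) 0 = hcf v * t + hbf v := rfl
      have hy1 : diagPt (hcf v * t + hbf v) 1 = hcf v * t + hbf v := rfl
      apply le_trans (dist_le_coord _ _)
      rw [hy0, hy1]
      simp only [hcf_def, hbf_def]
      have e0 : |u 0 - (-(v 0 - v 1) * t + v 0)| = |(v 0 - v 1) * σ * γ'| := by
        rw [h0]; congr 1; ring
      have e1 : |u 1 - (-(v 0 - v 1) * t + v 0)| = |(v 0 - v 1) * σ * (γ' - 1)| := by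
        have : u 1 = u 0 - σ * (v 0 - v 1) := by linarith [hd]
        rw [this, h0]; congr 1; ring
      rw [e0, e1, abs_mul, abs_mul, abs_mul, abs_mul]
      have hvM := hM v hv
      have hγR := hR γ' hγ'
      have hγ1 : |γ' - 1| ≤ R + 1 := by
        calc |γ' - 1| ≤ |γ'| + |(1:ℝ)| := abs_sub _ _
          _ ≤ R + 1 := by rw [abs_one]; linarith
      have h1 : |v 0 - v 1| * |σ| * |γ'| ≤ M * r ^ n * R := by
        apply mul_le_mul _ hγR (abs_nonneg _) (by positivity)
        exact mul_le_mul hvM hσ (abs_nonneg _) hM0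
      have h2 : |v 0 - v 1| * |σ| * |γ' - 1| ≤ M * r ^ n * (R + 1) := by
        apply mul_le_mul _ hγ1 (abs_nonneg _) (by positivity)
        exact mul_le_mul hvM hσ (abs_nonneg _) hM0
      calc |v 0 - v 1| * |σ| * |γ'| + |v 0 - v 1| * |σ| * |γ' - 1|
          ≤ M * r ^ n * R + M * r ^ n * (R + 1) := add_le_add h1 h2
        _ = C * r ^ n := by rw [hC_def]; ring
  -- conclude
  refine ⟨c, b, hclt, Γ, hΓc, hΓne, hΓinv, hcf, hbf, ?_⟩
  have htend : Tendsto (fun n : ℕ => C * r ^ n) atTop (𝓝 0) := by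
    have := (tendsto_pow_atTop_nhds_zero_of_lt_one hr0 hr1).const_mul C
    simpa using this
  exact squeeze_zero (fun n => hausdorffDist_nonneg) hbound htend
end
end

section
/- Let p ≥ 1 linear maps f_i on ℝ^D and suppose there exist subspaces V, W ⊆ ℝ^D with V ⊕ W = ℝ^D such that for all i: (i) f_i(V) ⊆ V and the induced map f_{i,V} : V → V is either a contraction or the identity; (ii) f_i(W) ⊆ W and the induced map f_{i,W} : W → W is a contraction. Then (H^n(K_0))_n converges in the Hausdorff metric for every nonempty compact K_0 ⊆ ℝ^D to a set L. Precisely: either at least one f_{i,V} is the identity, and then L = cl(⋃_{n≥0} p_{V,W}(H^n(K_0))) where p_{V,W} is the projection onto V along W; or else L = {0}. Moreover, L is the limit of the sequence (H_V^n(p_{V,W}(K_0)))_n where H_V is the Hutchinson operator of the IFS {f_{1,V},…,f_{p,V}}. -/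
open Metric Filter Pointwise Topology

noncomputable section

/-- The projection onto `V` along `W` for complementary subspaces `V ⊕ W = ℝ^D`. -/
def projVW {D : ℕ} (V W : Submodule ℝ (EuclideanSpace ℝ (Fin D))) (h : IsCompl V W) :
    EuclideanSpace ℝ (Fin D) →ₗ[ℝ] EuclideanSpace ℝ (Fin D) :=
  V.subtype ∘ₗ Submodule.linearProjOfIsCompl V W h

section aux

variable {D p : ℕ}
  {A : Fin (p + 1) → EuclideanSpace ℝ (Fin D) →L[ℝ] EuclideanSpace ℝ (Fin D)}

lemma stmt12_mem_hutch {K : Set (EuclideanSpace ℝ (Fin D))} {x : EuclideanSpace ℝ (Fin D)} :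
    x ∈ hutch (fun i x => A i x) K ↔ ∃ i, ∃ y ∈ K, A i y = x := by
  simp [hutch]

lemma stmt12_compact_iter {K : Set (EuclideanSpace ℝ (Fin D))} (hK : IsCompact K) (n : ℕ) :
    IsCompact ((hutch (fun i x => A i x))^[n] K) := by
  induction n with
  | zero => exact hK
  | succ n ih =>
    rw [Function.iterate_succ_apply']
    exact isCompact_iUnion fun i => ih.image (A i).continuous

lemma stmt12_ne_iter {K : Set (EuclideanSpace ℝ (Fin D))} (hK : K.Nonempty) (n : ℕ) :
    ((hutch (fun i x => A i x))^[n] K).Nonempty := by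
  induction n with
  | zero => exact hK
  | succ n ih =>
    rw [Function.iterate_succ_apply']
    obtain ⟨y, hy⟩ := ih
    exact ⟨A 0 y, stmt12_mem_hutch.2 ⟨0, y, hy, rfl⟩⟩

/-- Norm decay along iterates, for a "component" function `g` commuting with the maps. -/
lemma stmt12_norm_iter (g : EuclideanSpace ℝ (Fin D) → EuclideanSpace ℝ (Fin D))
    (hg : ∀ i x, g (A i x) = A i (g x)) (c M : ℝ) (hc0 : 0 ≤ c)
    (hgc : ∀ i x, ‖A i (g x)‖ ≤ c * ‖g x‖)
    (S : Set (EuclideanSpace ℝ (Fin D))) (hM : ∀ x ∈ S, ‖g x‖ ≤ M) :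
    ∀ n, ∀ x ∈ (hutch (fun i x => A i x))^[n] S, ‖g x‖ ≤ c ^ n * M := by
  intro n
  induction n with
  | zero => simpa using hM
  | succ n ih =>
    intro x hx
    rw [Function.iterate_succ_apply'] at hx
    obtain ⟨i, y, hy, rfl⟩ := stmt12_mem_hutch.1 hx
    calc ‖g (A i y)‖ = ‖A i (g y)‖ := by rw [hg]
      _ ≤ c * ‖g y‖ := hgc i y
      _ ≤ c * (c ^ n * M) := by
          exact mul_le_mul_of_nonneg_left (ih y hy) hc0
      _ = c ^ (n + 1) * M := by ring

lemma stmt12_image_iter (g : EuclideanSpace ℝ (Fin D) → EuclideanSpace ℝ (Fin D))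
    (hg : ∀ i x, g (A i x) = A i (g x)) (S : Set (EuclideanSpace ℝ (Fin D))) :
    ∀ n, g '' ((hutch (fun i x => A i x))^[n] S) = (hutch (fun i x => A i x))^[n] (g '' S) := by
  intro n
  induction n with
  | zero => rfl
  | succ n ih =>
    rw [Function.iterate_succ_apply', Function.iterate_succ_apply', ← ih]
    simp only [hutch, Set.image_iUnion, Set.image_image]
    exact Set.iUnion_congr fun i => Set.image_congr fun x _ => hg i x

end aux

/-- Theorem `theo:linproj`. Suppose `ℝ^D = V ⊕ W`, each `f_i` preserves `V`
and `W`, the induced maps on `V` are contractions or the identity, and the induced maps on `W`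
are contractions. Then `(H^n(K₀))_n` converges for every nonempty compact `K₀`: if at least one
induced map on `V` is the identity, the limit is `L = cl(⋃_n p_{V,W}(H^n(K₀)))`, otherwise the
limit is `{0}`; in both cases `L` is also the limit of `(H_V^n(p_{V,W}(K₀)))_n`. -/
theorem stmt12 {D p : ℕ}
    (A : Fin (p + 1) → EuclideanSpace ℝ (Fin D) →L[ℝ] EuclideanSpace ℝ (Fin D))
    (f : Fin (p + 1) → EuclideanSpace ℝ (Fin D) → EuclideanSpace ℝ (Fin D))
    (hf : ∀ i x, f i x = A i x)
    (V W : Submodule ℝ (EuclideanSpace ℝ (Fin D))) (hVW : IsCompl V W)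
    (hV : ∀ i, (∀ v ∈ V, A i v ∈ V) ∧
      ((∃ c : ℝ, 0 ≤ c ∧ c < 1 ∧ ∀ v ∈ V, ‖A i v‖ ≤ c * ‖v‖) ∨ (∀ v ∈ V, A i v = v)))
    (hW : ∀ i, (∀ w ∈ W, A i w ∈ W) ∧
      (∃ c : ℝ, 0 ≤ c ∧ c < 1 ∧ ∀ w ∈ W, ‖A i w‖ ≤ c * ‖w‖))
    (K₀ : Set (EuclideanSpace ℝ (Fin D))) (hK₀c : IsCompact K₀) (hK₀ne : K₀.Nonempty) :
    ((∃ i, ∀ v ∈ V, A i v = v) →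
      Tendsto (fun n => hausdorffDist ((hutch f)^[n] K₀)
        (closure (⋃ n, projVW V W hVW '' ((hutch f)^[n] K₀)))) atTop (𝓝 0) ∧
      Tendsto (fun n => hausdorffDist ((hutch f)^[n] (projVW V W hVW '' K₀))
        (closure (⋃ n, projVW V W hVW '' ((hutch f)^[n] K₀)))) atTop (𝓝 0)) ∧
    ((∀ i, ¬ (∀ v ∈ V, A i v = v)) →
      Tendsto (fun n => hausdorffDist ((hutch f)^[n] K₀) {0}) atTop (𝓝 0) ∧
      Tendsto (fun n => hausdorffDist ((hutch f)^[n] (projVW V W hVW '' K₀)) {0})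
        atTop (𝓝 0)) := by
  have hffun : f = fun i x => A i x := funext fun i => funext fun x => hf i x
  subst hffun
  set P : EuclideanSpace ℝ (Fin D) →ₗ[ℝ] EuclideanSpace ℝ (Fin D) := projVW V W hVW with hPdef
  -- basic facts about P
  have hPmem : ∀ x, P x ∈ V := fun x => (Submodule.linearProjOfIsCompl V W hVW x).2
  have hPV : ∀ v ∈ V, P v = v := by
    intro v hv
    have := Submodule.linearProjOfIsCompl_apply_left hVW ⟨v, hv⟩
    exact congrArg Subtype.val this
  have hPW : ∀ w ∈ W, P w = 0 := by
    intro w hw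
    have := Submodule.linearProjOfIsCompl_apply_right hVW ⟨w, hw⟩
    exact congrArg Subtype.val this
  have hsubW : ∀ x, x - P x ∈ W := by
    intro x
    obtain ⟨u, w, huw, -⟩ := Submodule.existsUnique_add_of_isCompl hVW x
    have hPx : P x = u := by
      rw [← huw, map_add, hPV _ u.2, hPW _ w.2, add_zero]
    rw [hPx, ← huw]
    simp only [add_sub_cancel_left]; exact w.2
  have hcomm : ∀ i x, P ((A i) x) = (A i) (P x) := by
    intro i x
    have hx : (A i) x = (A i) (P x) + (A i) (x - P x) := by
      rw [← map_add]
      congr 1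
      abel
    rw [hx, map_add, hPV _ ((hV i).1 _ (hPmem x)), hPW _ ((hW i).1 _ (hsubW x)), add_zero]
  have hcommq : ∀ i x, (A i) x - P ((A i) x) = (A i) (x - P x) := by
    intro i x
    rw [hcomm i x, ← map_sub]
  -- uniform contraction constant on W
  obtain ⟨cW, hcW0, hcW1, hcW⟩ :
      ∃ c : ℝ, 0 ≤ c ∧ c < 1 ∧ ∀ i, ∀ w ∈ W, ‖(A i) w‖ ≤ c * ‖w‖ := by
    choose c hc0 hc1 hc using fun i => (hW i).2
    refine ⟨Finset.univ.sup' Finset.univ_nonempty c, ?_, ?_, ?_⟩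
    · exact le_trans (hc0 0) (Finset.le_sup' c (Finset.mem_univ 0))
    · exact (Finset.sup'_lt_iff _).2 fun i _ => hc1 i
    · intro i w hw
      exact le_trans (hc i w hw)
        (mul_le_mul_of_nonneg_right (Finset.le_sup' c (Finset.mem_univ i)) (norm_nonneg _))
  -- norms bounds on K₀
  obtain ⟨R₁, hR₁⟩ := hK₀c.isBounded.exists_norm_le
  set R : ℝ := max R₁ 0 with hRdef
  have hR0 : 0 ≤ R := le_max_right _ _
  have hR : ∀ x ∈ K₀, ‖x‖ ≤ R := fun x hx => le_trans (hR₁ x hx) (le_max_left _ _)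
  have hPcont : Continuous P := P.continuous_of_finiteDimensional
  set P' : EuclideanSpace ℝ (Fin D) →L[ℝ] EuclideanSpace ℝ (Fin D) :=
    LinearMap.toContinuousLinearMap P with hP'def
  have hP'eq : ∀ x, P' x = P x := fun x => rfl
  set MV : ℝ := ‖P'‖ * R with hMVdef
  have hMV0 : 0 ≤ MV := mul_nonneg (norm_nonneg _) hR0
  have hMV : ∀ x ∈ K₀, ‖P x‖ ≤ MV := by
    intro x hx
    calc ‖P x‖ = ‖P' x‖ := by rw [hP'eq]
      _ ≤ ‖P'‖ * ‖x‖ := P'.le_opNorm x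
      _ ≤ ‖P'‖ * R := mul_le_mul_of_nonneg_left (hR x hx) (norm_nonneg _)
  set MW : ℝ := R + MV with hMWdef
  have hMW0 : 0 ≤ MW := add_nonneg hR0 hMV0
  have hMW : ∀ x ∈ K₀, ‖x - P x‖ ≤ MW := by
    intro x hx
    calc ‖x - P x‖ ≤ ‖x‖ + ‖P x‖ := norm_sub_le _ _
      _ ≤ R + MV := add_le_add (hR x hx) (hMV x hx)
  -- distance from iterates of K₀ to their projections
  have hWdecay : ∀ n, ∀ x ∈ (hutch (fun i x => A i x))^[n] K₀,
      ‖x - P x‖ ≤ cW ^ n * MW := by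
    refine stmt12_norm_iter (fun x => x - P x) (fun i x => (hcommq i x)) cW MW hcW0
      (fun i x => hcW i _ (hsubW x)) K₀ hMW
  constructor
  · -- Case 1 : some map is the identity on V
    rintro ⟨i₀, hi₀⟩
    set S : Set (EuclideanSpace ℝ (Fin D)) := P '' K₀ with hSdef
    have hSc : IsCompact S := hK₀c.image hPcont
    have hSne : S.Nonempty := hK₀ne.image _
    set Kn : ℕ → Set (EuclideanSpace ℝ (Fin D)) :=
      fun n => (hutch (fun i x => A i x))^[n] S with hKndef
    have himg : ∀ n, P '' ((hutch (fun i x => A i x))^[n] K₀) = Kn n :=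
      stmt12_image_iter P hcomm K₀
    have hKc : ∀ n, IsCompact (Kn n) := stmt12_compact_iter hSc
    have hKne : ∀ n, (Kn n).Nonempty := stmt12_ne_iter hSne
    -- Kn n ⊆ V
    have hKnV : ∀ n, Kn n ⊆ V := by
      intro n
      induction n with
      | zero => rintro x ⟨y, -, rfl⟩; exact hPmem y
      | succ n ih =>
        intro x hx
        have hx' : x ∈ (hutch fun i x => (A i) x)^[n + 1] S := hx
        rw [Function.iterate_succ_apply'] at hx'
        obtain ⟨i, y, hy, rfl⟩ := stmt12_mem_hutch.1 hx'
        exact (hV i).1 y (ih hy)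
    -- on V, each A i is norm non-increasing
    have hV1 : ∀ i, ∀ v ∈ V, ‖(A i) v‖ ≤ ‖v‖ := by
      intro i v hv
      rcases (hV i).2 with ⟨c, hc0, hc1, hc⟩ | hid
      · exact le_trans (hc v hv) (mul_le_of_le_one_left (norm_nonneg v) hc1.le)
      · rw [hid v hv]
    -- uniform bound
    have hSM : ∀ y ∈ S, ‖P y‖ ≤ MV := by
      rintro y ⟨x, hx, rfl⟩
      rw [hPV _ (hPmem x)]
      exact hMV x hx
    have hKnB : ∀ n, ∀ x ∈ Kn n, ‖x‖ ≤ MV := by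
      intro n x hx
      have h2 : ‖P x‖ ≤ 1 ^ n * MV := stmt12_norm_iter (fun x => P x) hcomm 1 MV zero_le_one
        (fun i x => by simpa using hV1 i (P x) (hPmem x)) S hSM n x hx
      rw [hPV x (hKnV n hx)] at h2
      simpa using h2
    -- monotonicity
    have hmono : Monotone Kn := by
      apply monotone_nat_of_le_succ
      intro n x hx
      show x ∈ (hutch fun i x => (A i) x)^[n + 1] S
      rw [Function.iterate_succ_apply']
      exact stmt12_mem_hutch.2 ⟨i₀, x, hx, hi₀ x (hKnV n hx)⟩
    -- the limit set
    set L : Set (EuclideanSpace ℝ (Fin D)) := closure (⋃ n, Kn n) with hLdef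
    have hgoalL : closure (⋃ n, (P : EuclideanSpace ℝ (Fin D) →ₗ[ℝ] EuclideanSpace ℝ (Fin D)) ''
        ((hutch (fun i x => A i x))^[n] K₀)) = L := by
      rw [hLdef]
      exact congrArg closure (Set.iUnion_congr himg)
    have hLb : (⋃ n, Kn n) ⊆ closedBall 0 MV := by
      rintro x hx
      obtain ⟨n, hn⟩ := Set.mem_iUnion.1 hx
      rw [mem_closedBall_zero_iff]
      exact hKnB n x hn
    have hLcomp : IsCompact L :=
      (isCompact_closedBall (0 : EuclideanSpace ℝ (Fin D)) MV).of_isClosed_subset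
        isClosed_closure (closure_minimal hLb isClosed_closedBall)
    -- key convergence of Kn to L
    have lemE : Tendsto (fun n => hausdorffDist (Kn n) L) atTop (𝓝 0) := by
      rw [Metric.tendsto_atTop]
      intro ε hε
      have hcov : L ⊆ ⋃ n, thickening (ε / 2) (Kn n) := by
        intro y hy
        obtain ⟨z, hz, hd⟩ := Metric.mem_closure_iff.1 hy (ε / 2) (half_pos hε)
        obtain ⟨n, hn⟩ := Set.mem_iUnion.1 hz
        exact Set.mem_iUnion.2 ⟨n, mem_thickening_iff.2 ⟨z, hn, hd⟩⟩
      obtain ⟨t, ht⟩ := hLcomp.elim_finite_subcover _ (fun n => isOpen_thickening) hcov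
      refine ⟨t.sup id, fun n hn => ?_⟩
      have hsub2 : L ⊆ thickening (ε / 2) (Kn n) := by
        intro y hy
        have := ht hy
        simp only [Set.mem_iUnion] at this
        obtain ⟨m, hmt, hym⟩ := this
        exact thickening_subset_of_subset _
          (hmono ((Finset.le_sup (f := id) hmt).trans hn)) hym
      have hle : hausdorffDist (Kn n) L ≤ ε / 2 := by
        refine hausdorffDist_le_of_mem_dist (half_pos hε).le ?_ ?_
        · intro x hx
          exact ⟨x, subset_closure (Set.mem_iUnion.2 ⟨n, hx⟩), by simpa using (half_pos hε).le⟩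
        · intro y hy
          obtain ⟨z, hz, hd⟩ := mem_thickening_iff.1 (hsub2 hy)
          exact ⟨z, hz, hd.le⟩
      have : dist (hausdorffDist (Kn n) L) 0 = hausdorffDist (Kn n) L := by
        rw [dist_zero_right, Real.norm_of_nonneg hausdorffDist_nonneg]
      rw [this]
      exact lt_of_le_of_lt hle (by linarith)
    constructor
    · -- first sequence
      rw [hgoalL]
      have hbound : ∀ n, hausdorffDist ((hutch (fun i x => A i x))^[n] K₀) L ≤
          cW ^ n * MW + hausdorffDist (Kn n) L := by
        intro n
        have hedist : EMetric.hausdorffEdist ((hutch (fun i x => A i x))^[n] K₀) (Kn n) ≠ ⊤ :=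
          hausdorffEdist_ne_top_of_nonempty_of_bounded (stmt12_ne_iter hK₀ne n) (hKne n)
            (stmt12_compact_iter hK₀c n).isBounded (hKc n).isBounded
        refine le_trans (hausdorffDist_triangle hedist) ?_
        have h1 : hausdorffDist ((hutch (fun i x => A i x))^[n] K₀) (Kn n) ≤ cW ^ n * MW := by
          refine hausdorffDist_le_of_mem_dist
            (mul_nonneg (pow_nonneg hcW0 n) hMW0) ?_ ?_
          · intro x hx
            refine ⟨P x, ?_, ?_⟩
            · rw [← himg n]; exact ⟨x, hx, rfl⟩
            · rw [dist_eq_norm]; exact hWdecay n x hx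
          · intro y hy
            rw [← himg n] at hy
            obtain ⟨x, hx, rfl⟩ := hy
            refine ⟨x, hx, ?_⟩
            rw [dist_eq_norm, norm_sub_rev]
            exact hWdecay n x hx
        linarith
      apply squeeze_zero (fun n => hausdorffDist_nonneg) hbound
      have hpow : Tendsto (fun n : ℕ => cW ^ n * MW) atTop (𝓝 0) := by
        simpa using (tendsto_pow_atTop_nhds_zero_of_lt_one hcW0 hcW1).mul_const MW
      simpa using hpow.add lemE
    · -- second sequence: it is exactly Kn
      rw [hgoalL]
      exact lemE
  · -- Case 2 : all maps are contractions on V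
    intro hnot
    obtain ⟨cV, hcV0, hcV1, hcVb⟩ :
        ∃ c : ℝ, 0 ≤ c ∧ c < 1 ∧ ∀ i, ∀ v ∈ V, ‖(A i) v‖ ≤ c * ‖v‖ := by
      have : ∀ i, ∃ c : ℝ, 0 ≤ c ∧ c < 1 ∧ ∀ v ∈ V, ‖(A i) v‖ ≤ c * ‖v‖ := by
        intro i
        rcases (hV i).2 with h | h
        · exact h
        · exact absurd h (hnot i)
      choose c hc0 hc1 hc using this
      refine ⟨Finset.univ.sup' Finset.univ_nonempty c, ?_, ?_, ?_⟩
      · exact le_trans (hc0 0) (Finset.le_sup' c (Finset.mem_univ 0))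
      · exact (Finset.sup'_lt_iff _).2 fun i _ => hc1 i
      · intro i v hv
        exact le_trans (hc i v hv)
          (mul_le_mul_of_nonneg_right (Finset.le_sup' c (Finset.mem_univ i)) (norm_nonneg _))
    set c : ℝ := max cV cW with hcdef
    have hc0 : 0 ≤ c := le_trans hcV0 (le_max_left _ _)
    have hc1 : c < 1 := max_lt hcV1 hcW1
    have hcV' : ∀ i, ∀ v ∈ V, ‖(A i) v‖ ≤ c * ‖v‖ := fun i v hv =>
      le_trans (hcVb i v hv) (mul_le_mul_of_nonneg_right (le_max_left _ _) (norm_nonneg _))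
    have hcW' : ∀ i, ∀ w ∈ W, ‖(A i) w‖ ≤ c * ‖w‖ := fun i w hw =>
      le_trans (hcW i w hw) (mul_le_mul_of_nonneg_right (le_max_right _ _) (norm_nonneg _))
    -- general claim
    have main2 : ∀ (S : Set (EuclideanSpace ℝ (Fin D))), S.Nonempty →
        ∀ (M₁ M₂ : ℝ), 0 ≤ M₁ → 0 ≤ M₂ → (∀ x ∈ S, ‖P x‖ ≤ M₁) → (∀ x ∈ S, ‖x - P x‖ ≤ M₂) →
        Tendsto (fun n => hausdorffDist ((hutch (fun i x => A i x))^[n] S) {0}) atTop (𝓝 0) := by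
      intro S hSne M₁ M₂ hM₁0 hM₂0 hM₁ hM₂
      have bV := stmt12_norm_iter (fun x => P x) hcomm c M₁ hc0
        (fun i x => hcV' i (P x) (hPmem x)) S hM₁
      have bW := stmt12_norm_iter (fun x => x - P x) (fun i x => hcommq i x) c M₂ hc0
        (fun i x => hcW' i _ (hsubW x)) S hM₂
      have hb : ∀ n, ∀ x ∈ (hutch (fun i x => A i x))^[n] S, ‖x‖ ≤ c ^ n * (M₁ + M₂) := by
        intro n x hx
        calc ‖x‖ = ‖P x + (x - P x)‖ := by congr 1; abel
          _ ≤ ‖P x‖ + ‖x - P x‖ := norm_add_le _ _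
          _ ≤ c ^ n * M₁ + c ^ n * M₂ := add_le_add (bV n x hx) (bW n x hx)
          _ = c ^ n * (M₁ + M₂) := by ring
      apply squeeze_zero (fun n => hausdorffDist_nonneg)
        (g := fun n => c ^ n * (M₁ + M₂))
      · intro n
        refine hausdorffDist_le_of_mem_dist
          (mul_nonneg (pow_nonneg hc0 n) (add_nonneg hM₁0 hM₂0)) ?_ ?_
        · intro x hx
          refine ⟨0, rfl, ?_⟩
          rw [dist_zero_right]
          exact hb n x hx
        · intro y hy
          obtain ⟨x, hx⟩ := stmt12_ne_iter hSne n
          refine ⟨x, hx, ?_⟩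
          rw [Set.mem_singleton_iff] at hy
          rw [hy, dist_comm, dist_zero_right]
          exact hb n x hx
      · simpa using (tendsto_pow_atTop_nhds_zero_of_lt_one hc0 hc1).mul_const (M₁ + M₂)
    constructor
    · exact main2 K₀ hK₀ne MV MW hMV0 hMW0 hMV hMW
    · refine main2 (P '' K₀) (hK₀ne.image _) MV MW hMV0 hMW0 ?_ ?_
      · rintro y ⟨x, hx, rfl⟩
        rw [hPV _ (hPmem x)]
        exact hMV x hx
      · rintro y ⟨x, hx, rfl⟩
        rw [hPV _ (hPmem x)]
        simpa using hMW0
end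
end
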